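/- arXiv:1510.06260 — 5 statements merged into one kernel-verified Lean document; each statement's English description precedes it below -/
import Mathlib

section
/- Let (X,Y) be a random couple of real numbers and (X̄,Ȳ) an independent copy of (X,Y). Assume the law of Y has a density ρ_Y with respect to Lebesgue measure with ‖ρ_Y‖_∞ < ∞. Then E[|K(X - X̄) - K(Y - Ȳ)|] ≤ 8 ‖ρ_Y‖_∞ E[|X - Y|], where K(x) = (1/2)sign(x). -/
open MeasureTheory ProbabilityTheory

noncomputable def K (x : ℝ) : ℝ := Real.sign x / 2

lemma measurable_sign' : Measurable Real.sign := by
  unfold Real.sign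
  exact Measurable.ite (measurableSet_lt measurable_id measurable_const) measurable_const
    (Measurable.ite (measurableSet_lt measurable_const measurable_id) measurable_const
      measurable_const)

lemma measurable_K : Measurable K := measurable_sign'.div_const 2

lemma abs_K_le (x : ℝ) : |K x| ≤ 1/2 := by
  unfold K
  rcases lt_trichotomy x 0 with h | h | h
  · rw [Real.sign_of_neg h]
    rw [abs_of_nonpos (by norm_num)]
    norm_num
  · rw [h, Real.sign_zero]
    norm_num
  · rw [Real.sign_of_pos h]
    rw [abs_of_nonneg (by norm_num)]

lemma abs_le_of_K_ne {a b : ℝ} (h : K a ≠ K b) : |b| ≤ |a - b| := by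
  have hs : Real.sign a ≠ Real.sign b := fun he => h (by unfold K; rw [he])
  rcases lt_trichotomy b 0 with hb | hb | hb
  · rw [Real.sign_of_neg hb] at hs
    have ha : 0 ≤ a := by
      by_contra hc
      push_neg at hc
      exact hs (Real.sign_of_neg hc)
    rw [abs_of_neg hb, abs_of_nonneg (by linarith)]
    linarith
  · simp [hb]
  · rw [Real.sign_of_pos hb] at hs
    have ha : a ≤ 0 := by
      by_contra hc
      push_neg at hc
      exact hs (Real.sign_of_pos hc)
    rw [abs_of_pos hb, abs_of_nonpos (by linarith)]
    linarith

lemma Kdiff_le (a b s t : ℝ) (hab : a - b = s - t) :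
    |K a - K b| ≤ (if |b| ≤ 2*|s| then (1:ℝ) else 0) + (if |b| ≤ 2*|t| then (1:ℝ) else 0) := by
  by_cases h : K a = K b
  · rw [h, sub_self, abs_zero]
    positivity
  · have hb : |b| ≤ |a - b| := abs_le_of_K_ne h
    have hst : |a - b| ≤ |s| + |t| := by rw [hab]; exact abs_sub _ _
    have hK : |K a - K b| ≤ 1 := by
      calc |K a - K b| ≤ |K a| + |K b| := abs_sub _ _
      _ ≤ 1/2 + 1/2 := add_le_add (abs_K_le a) (abs_K_le b)
      _ = 1 := by norm_num
    have hor : |b| ≤ 2*|s| ∨ |b| ≤ 2*|t| := by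
      by_contra hc
      push_neg at hc
      obtain ⟨h1, h2⟩ := hc
      linarith
    rcases hor with h1 | h1
    · rw [if_pos h1]
      have : (0:ℝ) ≤ if |b| ≤ 2*|t| then (1:ℝ) else 0 := by positivity
      linarith
    · rw [if_pos h1]
      have : (0:ℝ) ≤ if |b| ≤ 2*|s| then (1:ℝ) else 0 := by positivity
      linarith

lemma slice_eq (y r : ℝ) : {z : ℝ | |y - z| ≤ r} = Set.Icc (y - r) (y + r) := by
  ext z
  simp only [Set.mem_setOf_eq, Set.mem_Icc, abs_sub_le_iff]
  constructor <;> intro h <;> constructor <;> linarith [h.1, h.2]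

lemma key_prod_bound (ν : Measure (ℝ × ℝ)) [IsProbabilityMeasure ν]
    (ρ : ℝ → ℝ) (hρ : Measurable ρ) (M : ℝ) (hM0 : 0 ≤ M)
    (hMae : ∀ᵐ y ∂(volume : Measure ℝ), ρ y ≤ M) :
    ν.prod (volume.withDensity fun t => ENNReal.ofReal (ρ t))
      {p : (ℝ × ℝ) × ℝ | |p.1.2 - p.2| ≤ 2*|p.1.1 - p.1.2|}
      ≤ ∫⁻ q, ENNReal.ofReal (4*M*|q.1 - q.2|) ∂ν := by
  set η : Measure ℝ := volume.withDensity fun t => ENNReal.ofReal (ρ t) with hη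
  have hT : MeasurableSet {p : (ℝ × ℝ) × ℝ | |p.1.2 - p.2| ≤ 2*|p.1.1 - p.1.2|} := by
    apply measurableSet_le <;> fun_prop
  rw [Measure.prod_apply hT]
  apply lintegral_mono_ae
  filter_upwards with q
  have hpre : (Prod.mk q ⁻¹' {p : (ℝ × ℝ) × ℝ | |p.1.2 - p.2| ≤ 2*|p.1.1 - p.1.2|})
      = Set.Icc (q.2 - 2*|q.1 - q.2|) (q.2 + 2*|q.1 - q.2|) := by
    rw [← slice_eq]
    rfl
  rw [hpre, hη, withDensity_apply _ measurableSet_Icc]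
  calc ∫⁻ t in Set.Icc (q.2 - 2*|q.1 - q.2|) (q.2 + 2*|q.1 - q.2|), ENNReal.ofReal (ρ t) ∂volume
      ≤ ∫⁻ _ in Set.Icc (q.2 - 2*|q.1 - q.2|) (q.2 + 2*|q.1 - q.2|), ENNReal.ofReal M ∂volume := by
        apply lintegral_mono_ae
        filter_upwards [ae_restrict_of_ae hMae] with t ht
        exact ENNReal.ofReal_le_ofReal ht
    _ = ENNReal.ofReal M * volume (Set.Icc (q.2 - 2*|q.1 - q.2|) (q.2 + 2*|q.1 - q.2|)) := by
        rw [setLIntegral_const]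
    _ ≤ ENNReal.ofReal (4*M*|q.1 - q.2|) := by
        rw [Real.volume_Icc, ← ENNReal.ofReal_mul hM0]
        apply ENNReal.ofReal_le_ofReal
        have : (0:ℝ) ≤ |q.1 - q.2| := abs_nonneg _
        nlinarith

theorem stmt_1 {Ω : Type*} [MeasureSpace Ω] (μ : Measure Ω) [IsProbabilityMeasure μ]
    (X Y Xb Yb : Ω → ℝ)
    (hX : Measurable X) (hY : Measurable Y) (hXb : Measurable Xb) (hYb : Measurable Yb)
    (h_indep : IndepFun (fun ω => (X ω, Y ω)) (fun ω => (Xb ω, Yb ω)) μ)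
    (h_copy : Measure.map (fun ω => (Xb ω, Yb ω)) μ = Measure.map (fun ω => (X ω, Y ω)) μ)
    (ρY : ℝ → ℝ) (hρY_meas : Measurable ρY)
    (h_density : Measure.map Y μ = volume.withDensity (fun y => ENNReal.ofReal (ρY y)))
    (M : ℝ) (hM : ∀ᵐ y ∂(volume : Measure ℝ), ρY y ≤ M)
    (h_int : Integrable (fun ω => |X ω - Y ω|) μ) :
    (∫ ω, |K (X ω - Xb ω) - K (Y ω - Yb ω)| ∂μ) ≤ 8 * M * ∫ ω, |X ω - Y ω| ∂μ := by
  -- nonnegativity of M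
  have hM0 : 0 ≤ M := by
    by_contra hc
    push_neg at hc
    have h1 : Measure.map Y μ Set.univ = 1 := by
      have : IsProbabilityMeasure (Measure.map Y μ) := Measure.isProbabilityMeasure_map hY.aemeasurable
      exact measure_univ
    have h0 : Measure.map Y μ Set.univ = 0 := by
      rw [h_density, withDensity_apply _ MeasurableSet.univ, Measure.restrict_univ]
      rw [lintegral_eq_zero_iff (by fun_prop)]
      filter_upwards [hM] with y hy
      simp [ENNReal.ofReal_eq_zero.2 (by linarith)]
    rw [h1] at h0
    exact one_ne_zero h0
  set I : ℝ := ∫ ω, |X ω - Y ω| ∂μ with hI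
  have hI0 : 0 ≤ I := integral_nonneg fun ω => abs_nonneg _
  -- the two "bad" sets
  set S1 : Set Ω := {ω | |Y ω - Yb ω| ≤ 2*|X ω - Y ω|} with hS1
  set S2 : Set Ω := {ω | |Y ω - Yb ω| ≤ 2*|Xb ω - Yb ω|} with hS2
  have hS1m : MeasurableSet S1 := by apply measurableSet_le <;> fun_prop
  have hS2m : MeasurableSet S2 := by apply measurableSet_le <;> fun_prop
  -- the lintegral bound target
  have hlin : ∫⁻ ω, ENNReal.ofReal (4*M*|X ω - Y ω|) ∂μ = ENNReal.ofReal (4*M*I) := by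
    rw [← ofReal_integral_eq_lintegral_ofReal]
    · rw [integral_const_mul]
    · exact h_int.const_mul _
    · filter_upwards with ω
      positivity
  -- bound on μ S1
  have hbound1 : μ S1 ≤ ENNReal.ofReal (4*M*I) := by
    have hV : Measurable fun ω => (X ω, Y ω) := hX.prodMk hY
    have hind : IndepFun (fun ω => (X ω, Y ω)) Yb μ :=
      h_indep.comp measurable_id measurable_snd
    have hmap : μ.map (fun ω => ((X ω, Y ω), Yb ω))
        = (μ.map fun ω => (X ω, Y ω)).prod (μ.map Yb) :=
      (indepFun_iff_map_prod_eq_prod_map_map hV.aemeasurable hYb.aemeasurable).mp hind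
    have hYbmap : μ.map Yb = volume.withDensity fun y => ENNReal.ofReal (ρY y) := by
      have h2 : μ.map Yb = μ.map Y := by
        have e1 : μ.map Yb = (μ.map fun ω => (Xb ω, Yb ω)).map Prod.snd := by
          rw [Measure.map_map measurable_snd (hXb.prodMk hYb)]
          rfl
        have e2 : μ.map Y = (μ.map fun ω => (X ω, Y ω)).map Prod.snd := by
          rw [Measure.map_map measurable_snd (hX.prodMk hY)]
          rfl
        rw [e1, e2, h_copy]
      rw [h2, h_density]
    have hT : MeasurableSet {p : (ℝ × ℝ) × ℝ | |p.1.2 - p.2| ≤ 2*|p.1.1 - p.1.2|} := by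
      apply measurableSet_le <;> fun_prop
    have hS1eq : S1 = (fun ω => ((X ω, Y ω), Yb ω)) ⁻¹'
        {p : (ℝ × ℝ) × ℝ | |p.1.2 - p.2| ≤ 2*|p.1.1 - p.1.2|} := rfl
    have hP : IsProbabilityMeasure (μ.map fun ω => (X ω, Y ω)) :=
      Measure.isProbabilityMeasure_map hV.aemeasurable
    calc μ S1 = μ.map (fun ω => ((X ω, Y ω), Yb ω))
          {p : (ℝ × ℝ) × ℝ | |p.1.2 - p.2| ≤ 2*|p.1.1 - p.1.2|} := by
          rw [Measure.map_apply (hV.prodMk hYb) hT, ← hS1eq]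
      _ = (μ.map fun ω => (X ω, Y ω)).prod (volume.withDensity fun y => ENNReal.ofReal (ρY y))
          {p : (ℝ × ℝ) × ℝ | |p.1.2 - p.2| ≤ 2*|p.1.1 - p.1.2|} := by
          rw [hmap, hYbmap]
      _ ≤ ∫⁻ q, ENNReal.ofReal (4*M*|q.1 - q.2|) ∂(μ.map fun ω => (X ω, Y ω)) :=
          key_prod_bound _ ρY hρY_meas M hM0 hM
      _ = ∫⁻ ω, ENNReal.ofReal (4*M*|X ω - Y ω|) ∂μ := by
          rw [lintegral_map (by fun_prop) hV]
      _ = ENNReal.ofReal (4*M*I) := hlin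
  -- bound on μ S2
  have hbound2 : μ S2 ≤ ENNReal.ofReal (4*M*I) := by
    have hV : Measurable fun ω => (Xb ω, Yb ω) := hXb.prodMk hYb
    have hind : IndepFun (fun ω => (Xb ω, Yb ω)) Y μ :=
      h_indep.symm.comp measurable_id measurable_snd
    have hmap : μ.map (fun ω => ((Xb ω, Yb ω), Y ω))
        = (μ.map fun ω => (Xb ω, Yb ω)).prod (μ.map Y) :=
      (indepFun_iff_map_prod_eq_prod_map_map hV.aemeasurable hY.aemeasurable).mp hind
    have hT : MeasurableSet {p : (ℝ × ℝ) × ℝ | |p.1.2 - p.2| ≤ 2*|p.1.1 - p.1.2|} := by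
      apply measurableSet_le <;> fun_prop
    have hS2eq : S2 = (fun ω => ((Xb ω, Yb ω), Y ω)) ⁻¹'
        {p : (ℝ × ℝ) × ℝ | |p.1.2 - p.2| ≤ 2*|p.1.1 - p.1.2|} := by
      ext ω
      simp only [hS2, Set.mem_setOf_eq, Set.mem_preimage]
      rw [abs_sub_comm (Y ω)]
    have hP : IsProbabilityMeasure (μ.map fun ω => (Xb ω, Yb ω)) :=
      Measure.isProbabilityMeasure_map hV.aemeasurable
    calc μ S2 = μ.map (fun ω => ((Xb ω, Yb ω), Y ω))
          {p : (ℝ × ℝ) × ℝ | |p.1.2 - p.2| ≤ 2*|p.1.1 - p.1.2|} := by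
          rw [Measure.map_apply (hV.prodMk hY) hT, ← hS2eq]
      _ = (μ.map fun ω => (Xb ω, Yb ω)).prod (volume.withDensity fun y => ENNReal.ofReal (ρY y))
          {p : (ℝ × ℝ) × ℝ | |p.1.2 - p.2| ≤ 2*|p.1.1 - p.1.2|} := by
          rw [hmap, h_density]
      _ ≤ ∫⁻ q, ENNReal.ofReal (4*M*|q.1 - q.2|) ∂(μ.map fun ω => (Xb ω, Yb ω)) :=
          key_prod_bound _ ρY hρY_meas M hM0 hM
      _ = ∫⁻ ω, ENNReal.ofReal (4*M*|X ω - Y ω|) ∂μ := by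
          rw [h_copy, lintegral_map (by fun_prop) (hX.prodMk hY)]
      _ = ENNReal.ofReal (4*M*I) := hlin
  -- pointwise bound and integration
  have hmeas1 : Measurable fun ω => |K (X ω - Xb ω) - K (Y ω - Yb ω)| :=
    ((measurable_K.comp (hX.sub hXb)).sub (measurable_K.comp (hY.sub hYb))).abs
  have hint1 : Integrable (fun ω => |K (X ω - Xb ω) - K (Y ω - Yb ω)|) μ := by
    apply (integrable_const (1:ℝ)).mono' hmeas1.aestronglyMeasurable
    filter_upwards with ω
    rw [Real.norm_eq_abs, abs_abs]
    calc |K (X ω - Xb ω) - K (Y ω - Yb ω)| ≤ |K (X ω - Xb ω)| + |K (Y ω - Yb ω)| := abs_sub _ _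
      _ ≤ 1/2 + 1/2 := add_le_add (abs_K_le _) (abs_K_le _)
      _ = 1 := by norm_num
  have hintS1 : Integrable (S1.indicator fun _ => (1:ℝ)) μ :=
    (integrable_const (1:ℝ)).indicator hS1m
  have hintS2 : Integrable (S2.indicator fun _ => (1:ℝ)) μ :=
    (integrable_const (1:ℝ)).indicator hS2m
  have hmono : (∫ ω, |K (X ω - Xb ω) - K (Y ω - Yb ω)| ∂μ)
      ≤ ∫ ω, (S1.indicator (fun _ => (1:ℝ)) ω + S2.indicator (fun _ => (1:ℝ)) ω) ∂μ := by
    apply integral_mono hint1 (hintS1.add hintS2)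
    intro ω
    have := Kdiff_le (X ω - Xb ω) (Y ω - Yb ω) (X ω - Y ω) (Xb ω - Yb ω) (by ring)
    simpa [Set.indicator_apply, hS1, hS2, Set.mem_setOf_eq] using this
  have hint_ind : (∫ ω, (S1.indicator (fun _ => (1:ℝ)) ω + S2.indicator (fun _ => (1:ℝ)) ω) ∂μ)
      = (μ S1).toReal + (μ S2).toReal := by
    rw [integral_add hintS1 hintS2, integral_indicator_const _ hS1m,
      integral_indicator_const _ hS2m]
    simp [Measure.real]
  have h1 : (μ S1).toReal ≤ 4*M*I := ENNReal.toReal_le_of_le_ofReal (by positivity) hbound1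
  have h2 : (μ S2).toReal ≤ 4*M*I := ENNReal.toReal_le_of_le_ofReal (by positivity) hbound2
  calc (∫ ω, |K (X ω - Xb ω) - K (Y ω - Yb ω)| ∂μ)
      ≤ (μ S1).toReal + (μ S2).toReal := hmono.trans_eq hint_ind
    _ ≤ 4*M*I + 4*M*I := add_le_add h1 h2
    _ = 8 * M * I := by ring
end

section
/- Let (X,Y) be a random couple of real numbers and (X̄,Ȳ) an independent copy. Let ε > 0 and assume ‖ρ_Y‖_{∞,ε} < ∞, where ρ_Y is the law of Y and ‖ρ‖_{∞,ε} := sup_x ρ([x-ε,x+ε])/(2ε). Then E[|K(X - X̄) - K(Y - Ȳ)|] ≤ 8 ‖ρ_Y‖_{∞,ε} (E[|X - Y|] + ε/2), where K(x) = (1/2)sign(x). -/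
open MeasureTheory ProbabilityTheory

lemma cover_aux (ν : Measure ℝ) [IsFiniteMeasure ν] {ε M : ℝ} (hε : 0 < ε) (hM0 : 0 ≤ M)
    (hM : ∀ x : ℝ, (ν (Set.Icc (x - ε) (x + ε))).toReal ≤ 2 * ε * M)
    (y r : ℝ) (hr : 0 ≤ r) :
    (ν (Set.Icc (y - r) (y + r))).toReal ≤ 2 * M * (r + ε) := by
  have step : ∀ n : ℕ, ∀ a : ℝ,
      (ν (Set.Icc a (a + 2 * ((n : ℝ) + 1) * ε))).toReal ≤ ((n : ℝ) + 1) * (2 * ε * M) := by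
    intro n
    induction n with
    | zero =>
      intro a
      have h := hM (a + ε)
      rw [show a + ε - ε = a by ring] at h
      rw [show a + 2 * ((0 : ℕ) + 1 : ℝ) * ε = a + ε + ε by push_cast; ring]
      push_cast
      linarith
    | succ n ih =>
      intro a
      set b := a + 2 * ((n : ℝ) + 1) * ε with hb
      have hsub : Set.Icc a (a + 2 * (((n : ℕ) + 1 : ℝ) + 1) * ε) ⊆
          Set.Icc a b ∪ Set.Icc b (b + 2 * ε) := by
        intro x hx
        rw [Set.mem_Icc] at hx
        by_cases hxb : x ≤ b
        · exact Or.inl (Set.mem_Icc.mpr ⟨hx.1, hxb⟩)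
        · exact Or.inr (Set.mem_Icc.mpr ⟨le_of_not_ge hxb, by rw [hb]; linarith [hx.2]⟩)
      have h1 : (ν (Set.Icc a (a + 2 * (((n : ℕ) + 1 : ℝ) + 1) * ε))).toReal ≤
          (ν (Set.Icc a b)).toReal + (ν (Set.Icc b (b + 2 * ε))).toReal := by
        calc (ν (Set.Icc a (a + 2 * (((n : ℕ) + 1 : ℝ) + 1) * ε))).toReal
            ≤ (ν (Set.Icc a b ∪ Set.Icc b (b + 2 * ε))).toReal :=
              ENNReal.toReal_mono (measure_ne_top _ _) (measure_mono hsub)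
          _ ≤ ((ν (Set.Icc a b)) + ν (Set.Icc b (b + 2 * ε))).toReal :=
              ENNReal.toReal_mono (by simp [ENNReal.add_ne_top, measure_ne_top]) (measure_union_le _ _)
          _ = (ν (Set.Icc a b)).toReal + (ν (Set.Icc b (b + 2 * ε))).toReal :=
              ENNReal.toReal_add (measure_ne_top _ _) (measure_ne_top _ _)
      have h2 := hM (b + ε)
      rw [show b + ε - ε = b by ring, show b + ε + ε = b + 2 * ε by ring] at h2
      have h3 := ih a
      push_cast
      push_cast at h1
      linarith
  set n := ⌊r / ε⌋₊ with hn
  have hn1 : r < ((n : ℝ) + 1) * ε := by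
    have := Nat.lt_floor_add_one (r / ε)
    calc r = (r / ε) * ε := by field_simp
    _ < ((n : ℝ) + 1) * ε := by apply mul_lt_mul_of_pos_right this hε
  have hn2 : (n : ℝ) * ε ≤ r := by
    have := Nat.floor_le (div_nonneg hr hε.le)
    calc (n : ℝ) * ε ≤ (r / ε) * ε := mul_le_mul_of_nonneg_right this hε.le
    _ = r := by field_simp
  have hsub : Set.Icc (y - r) (y + r) ⊆
      Set.Icc (y - r) ((y - r) + 2 * ((n : ℝ) + 1) * ε) := by
    apply Set.Icc_subset_Icc_right; nlinarith
  calc (ν (Set.Icc (y - r) (y + r))).toReal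
      ≤ (ν (Set.Icc (y - r) ((y - r) + 2 * ((n : ℝ) + 1) * ε))).toReal :=
        ENNReal.toReal_mono (measure_ne_top _ _) (measure_mono hsub)
    _ ≤ ((n : ℝ) + 1) * (2 * ε * M) := step n (y - r)
    _ ≤ 2 * M * (r + ε) := by nlinarith

lemma K_bound {a b : ℝ} (h : |K a - K b| ≠ 0) : |b| ≤ |a - b| ∧ |K a - K b| ≤ 1 := by
  have hne : Real.sign a ≠ Real.sign b := by
    intro he; apply h; simp [K, he]
  constructor
  · have hs : (a ≤ 0 ∧ 0 ≤ b) ∨ (b ≤ 0 ∧ 0 ≤ a) := by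
      rcases lt_trichotomy a 0 with ha | ha | ha <;>
        rcases lt_trichotomy b 0 with hb | hb | hb
      · exact absurd (by rw [Real.sign_of_neg ha, Real.sign_of_neg hb]) hne
      · exact Or.inl ⟨ha.le, hb.ge⟩
      · exact Or.inl ⟨ha.le, hb.le⟩
      · exact Or.inr ⟨hb.le, ha.ge⟩
      · exact absurd (by rw [ha, hb]) hne
      · exact Or.inl ⟨ha.le, hb.le⟩
      · exact Or.inr ⟨hb.le, ha.le⟩
      · exact Or.inr ⟨hb.le, ha.le⟩
      · exact absurd (by rw [Real.sign_of_pos ha, Real.sign_of_pos hb]) hne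
    rcases hs with ⟨ha, hb⟩ | ⟨hb, ha⟩
    · rw [abs_of_nonneg hb, abs_of_nonpos (by linarith)]; linarith
    · rw [abs_of_nonpos hb, abs_of_nonneg (by linarith)]; linarith
  · rcases Real.sign_apply_eq a with h1 | h1 | h1 <;>
      rcases Real.sign_apply_eq b with h2 | h2 | h2 <;>
      simp [K, h1, h2] <;> norm_num [abs_of_nonneg]

theorem stmt_3 {Ω : Type*} [MeasureSpace Ω] (μ : Measure Ω) [IsProbabilityMeasure μ]
    (X Y Xb Yb : Ω → ℝ)
    (hX : Measurable X) (hY : Measurable Y) (hXb : Measurable Xb) (hYb : Measurable Yb)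
    (h_indep : IndepFun (fun ω => (X ω, Y ω)) (fun ω => (Xb ω, Yb ω)) μ)
    (h_copy : Measure.map (fun ω => (Xb ω, Yb ω)) μ = Measure.map (fun ω => (X ω, Y ω)) μ)
    (ε : ℝ) (hε : 0 < ε) (M : ℝ)
    (hM : ∀ x : ℝ, ((Measure.map Y μ) (Set.Icc (x - ε) (x + ε))).toReal / (2 * ε) ≤ M)
    (h_int : Integrable (fun ω => |X ω - Y ω|) μ) :
    (∫ ω, |K (X ω - Xb ω) - K (Y ω - Yb ω)| ∂μ)
      ≤ 8 * M * ((∫ ω, |X ω - Y ω| ∂μ) + ε / 2) := by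
  -- basic notation
  set π : Measure (ℝ × ℝ) := Measure.map (fun ω => (X ω, Y ω)) μ with hπ
  set ν : Measure ℝ := Measure.map Y μ with hν
  set I : ℝ := ∫ ω, |X ω - Y ω| ∂μ with hI
  have hXY : Measurable (fun ω => (X ω, Y ω)) := hX.prodMk hY
  have hXbYb : Measurable (fun ω => (Xb ω, Yb ω)) := hXb.prodMk hYb
  haveI : IsProbabilityMeasure π := Measure.isProbabilityMeasure_map hXY.aemeasurable
  haveI : IsProbabilityMeasure ν := Measure.isProbabilityMeasure_map hY.aemeasurable
  have hM0 : 0 ≤ M := le_trans (by positivity) (hM 0)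
  have hMν : ∀ x : ℝ, (ν (Set.Icc (x - ε) (x + ε))).toReal ≤ 2 * ε * M := by
    intro x
    have := hM x
    rw [div_le_iff₀ (by positivity)] at this
    linarith
  have hI0 : 0 ≤ I := integral_nonneg fun ω => abs_nonneg _
  -- the sets
  set T1 : Set ((ℝ × ℝ) × ℝ × ℝ) := {p | |p.1.2 - p.2.2| ≤ 2 * |p.1.1 - p.1.2|} with hT1def
  set T2 : Set ((ℝ × ℝ) × ℝ × ℝ) := {p | |p.1.2 - p.2.2| ≤ 2 * |p.2.1 - p.2.2|} with hT2def
  have hT1 : MeasurableSet T1 :=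
    measurableSet_le ((measurable_fst.snd.sub measurable_snd.snd).abs)
      (((measurable_fst.fst.sub measurable_fst.snd).abs).const_mul 2)
  have hT2 : MeasurableSet T2 :=
    measurableSet_le ((measurable_fst.snd.sub measurable_snd.snd).abs)
      (((measurable_snd.fst.sub measurable_snd.snd).abs).const_mul 2)
  set E1 : Set Ω := (fun ω => ((X ω, Y ω), (Xb ω, Yb ω))) ⁻¹' T1 with hE1def
  set E2 : Set Ω := (fun ω => ((X ω, Y ω), (Xb ω, Yb ω))) ⁻¹' T2 with hE2def
  have hpair : Measurable (fun ω => ((X ω, Y ω), (Xb ω, Yb ω))) := hXY.prodMk hXbYb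
  have hE1 : MeasurableSet E1 := hpair hT1
  have hE2 : MeasurableSet E2 := hpair hT2
  -- independence : joint law is product
  have hmap : Measure.map (fun ω => ((X ω, Y ω), (Xb ω, Yb ω))) μ = π.prod π := by
    rw [(indepFun_iff_map_prod_eq_prod_map_map hXY.aemeasurable hXbYb.aemeasurable).mp h_indep,
      h_copy]
  have hμE1 : μ E1 = (π.prod π) T1 := by
    rw [hE1def, ← Measure.map_apply hpair hT1, hmap]
  have hμE2 : μ E2 = (π.prod π) T1 := by
    rw [hE2def, ← Measure.map_apply hpair hT2, hmap]
    have hswap : Prod.swap ⁻¹' T2 = T1 := by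
      ext p
      simp only [hT1def, hT2def, Set.mem_preimage, Set.mem_setOf_eq, Prod.fst_swap, Prod.snd_swap]
      rw [abs_sub_comm]
    rw [← hswap, ← Measure.map_apply measurable_swap hT2, Measure.prod_swap]
  -- bound on (π.prod π) T1
  have hsnd : Measure.map Prod.snd π = ν := by
    rw [hπ, Measure.map_map measurable_snd hXY]; rfl
  have hsecval : ∀ p : ℝ × ℝ,
      π (Prod.mk p ⁻¹' T1) ≤ ENNReal.ofReal (2 * M * (2 * |p.1 - p.2| + ε)) := by
    intro p
    have hsec : Prod.mk p ⁻¹' T1 =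
        Prod.snd ⁻¹' Set.Icc (p.2 - 2 * |p.1 - p.2|) (p.2 + 2 * |p.1 - p.2|) := by
      ext q
      simp only [hT1def, Set.mem_preimage, Set.mem_setOf_eq, Set.mem_Icc, abs_sub_le_iff]
      constructor <;> rintro ⟨h1, h2⟩ <;> constructor <;> linarith
    rw [hsec, ← Measure.map_apply measurable_snd measurableSet_Icc]
    calc (Measure.map Prod.snd π) (Set.Icc (p.2 - 2 * |p.1 - p.2|) (p.2 + 2 * |p.1 - p.2|))
        = ENNReal.ofReal (((Measure.map Prod.snd π)
            (Set.Icc (p.2 - 2 * |p.1 - p.2|) (p.2 + 2 * |p.1 - p.2|))).toReal) :=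
          (ENNReal.ofReal_toReal (by rw [hsnd]; exact measure_ne_top _ _)).symm
      _ ≤ ENNReal.ofReal (2 * M * (2 * |p.1 - p.2| + ε)) := by
          apply ENNReal.ofReal_le_ofReal
          rw [hsnd]
          exact cover_aux ν hε hM0 hMν p.2 (2 * |p.1 - p.2|) (by positivity)
  -- integrability of the dominating function over π
  have habs_int : Integrable (fun p : ℝ × ℝ => |p.1 - p.2|) π := by
    rw [hπ, integrable_map_measure (g := fun p : ℝ × ℝ => |p.1 - p.2|) ((measurable_fst.sub measurable_snd).abs.aestronglyMeasurable)
      hXY.aemeasurable]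
    exact h_int
  have hg_int : Integrable (fun p : ℝ × ℝ => 2 * M * (2 * |p.1 - p.2| + ε)) π :=
    (((habs_int.const_mul 2).add (integrable_const ε)).const_mul (2 * M))
  have hg_val : ∫ p : ℝ × ℝ, 2 * M * (2 * |p.1 - p.2| + ε) ∂π = 2 * M * (2 * I + ε) := by
    rw [hπ, integral_map hXY.aemeasurable]
    · show ∫ ω, 2 * M * (2 * |X ω - Y ω| + ε) ∂μ = 2 * M * (2 * I + ε)
      rw [integral_const_mul]
      congr 1
      rw [integral_add (h_int.const_mul 2) (integrable_const ε), integral_const_mul,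
        integral_const]
      simp [hI]
    · exact (((measurable_fst.sub measurable_snd).abs.const_mul 2).add measurable_const
        |>.const_mul (2 * M)).aestronglyMeasurable
  have hprodT1 : ((π.prod π) T1).toReal ≤ 2 * M * (2 * I + ε) := by
    apply ENNReal.toReal_le_of_le_ofReal (by positivity)
    calc (π.prod π) T1 = ∫⁻ p, π (Prod.mk p ⁻¹' T1) ∂π := Measure.prod_apply hT1
      _ ≤ ∫⁻ p, ENNReal.ofReal (2 * M * (2 * |p.1 - p.2| + ε)) ∂π :=
          lintegral_mono hsecval
      _ = ENNReal.ofReal (∫ p : ℝ × ℝ, 2 * M * (2 * |p.1 - p.2| + ε) ∂π) :=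
          (ofReal_integral_eq_lintegral_ofReal hg_int
            (Filter.Eventually.of_forall fun p => by positivity)).symm
      _ = ENNReal.ofReal (2 * M * (2 * I + ε)) := by rw [hg_val]
  -- pointwise bound
  have hpt : ∀ ω, |K (X ω - Xb ω) - K (Y ω - Yb ω)| ≤
      E1.indicator (fun _ => (1 : ℝ)) ω + E2.indicator (fun _ => (1 : ℝ)) ω := by
    intro ω
    by_cases h0 : |K (X ω - Xb ω) - K (Y ω - Yb ω)| = 0
    · rw [h0]
      have := Set.indicator_nonneg (s := E1) (f := fun _ : Ω => (1:ℝ)) (fun _ _ => zero_le_one) ω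
      have := Set.indicator_nonneg (s := E2) (f := fun _ : Ω => (1:ℝ)) (fun _ _ => zero_le_one) ω
      linarith
    · obtain ⟨hb, hle1⟩ := K_bound h0
      have hkey : |Y ω - Yb ω| ≤ |X ω - Y ω| + |Xb ω - Yb ω| := by
        calc |Y ω - Yb ω| ≤ |X ω - Xb ω - (Y ω - Yb ω)| := hb
          _ = |(X ω - Y ω) - (Xb ω - Yb ω)| := by ring_nf
          _ ≤ |X ω - Y ω| + |Xb ω - Yb ω| := abs_sub _ _
      have hmem : ω ∈ E1 ∨ ω ∈ E2 := by
        rcases le_total (|Xb ω - Yb ω|) (|X ω - Y ω|) with hc | hc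
        · left
          simp only [hE1def, hT1def, Set.mem_preimage, Set.mem_setOf_eq]
          linarith
        · right
          simp only [hE2def, hT2def, Set.mem_preimage, Set.mem_setOf_eq]
          linarith
      rcases hmem with hm | hm
      · have h1 : E1.indicator (fun _ => (1:ℝ)) ω = 1 := Set.indicator_of_mem hm _
        have h2 := Set.indicator_nonneg (s := E2) (f := fun _ : Ω => (1:ℝ))
          (fun _ _ => zero_le_one) ω
        linarith
      · have h1 : E2.indicator (fun _ => (1:ℝ)) ω = 1 := Set.indicator_of_mem hm _
        have h2 := Set.indicator_nonneg (s := E1) (f := fun _ : Ω => (1:ℝ))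
          (fun _ _ => zero_le_one) ω
        linarith
  -- combine
  have hind_int1 : Integrable (E1.indicator fun _ => (1:ℝ)) μ :=
    (integrable_const (1:ℝ)).indicator hE1
  have hind_int2 : Integrable (E2.indicator fun _ => (1:ℝ)) μ :=
    (integrable_const (1:ℝ)).indicator hE2
  calc (∫ ω, |K (X ω - Xb ω) - K (Y ω - Yb ω)| ∂μ)
      ≤ ∫ ω, (E1.indicator (fun _ => (1:ℝ)) ω + E2.indicator (fun _ => (1:ℝ)) ω) ∂μ :=
        integral_mono_of_nonneg (Filter.Eventually.of_forall fun ω => abs_nonneg _)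
          (hind_int1.add hind_int2) (Filter.Eventually.of_forall hpt)
    _ = (μ E1).toReal + (μ E2).toReal := by
        rw [integral_add hind_int1 hind_int2, integral_indicator_const _ hE1,
          integral_indicator_const _ hE2]
        simp
        rfl
    _ ≤ 2 * M * (2 * I + ε) + 2 * M * (2 * I + ε) := by
        rw [hμE1, hμE2]; exact add_le_add hprodT1 hprodT1
    _ = 8 * M * (I + ε / 2) := by ring
end

section
/- Let X₁,…,X_N be i.i.d. ℝ^d-valued random variables with common law ρ, and let ρ_N = (1/N)∑_{i=1}^N δ_{X_i} be the empirical measure. Then for all a ∈ ℝ^d, E[ sup_{u ≥ 0} | ∫ 𝟙_{|a-y| ≤ u} (ρ_N - ρ)(dy) | ] ≤ 3/√N. -/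
open MeasureTheory ProbabilityTheory Finset

noncomputable section DKW

variable {E : Type*} [MeasurableSpace E]

/-- real-valued indicator -/
def chiR (s : Set E) (x : E) : ℝ := s.indicator (fun _ => (1:ℝ)) x

lemma chiR_of_mem {s : Set E} {x : E} (h : x ∈ s) : chiR s x = 1 :=
  Set.indicator_of_mem h _

lemma chiR_of_not_mem {s : Set E} {x : E} (h : x ∉ s) : chiR s x = 0 :=
  Set.indicator_of_notMem h _

lemma chiR_nonneg (s : Set E) (x : E) : 0 ≤ chiR s x := by
  by_cases h : x ∈ s
  · rw [chiR_of_mem h]; norm_num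
  · rw [chiR_of_not_mem h]

lemma chiR_le_one (s : Set E) (x : E) : chiR s x ≤ 1 := by
  by_cases h : x ∈ s
  · rw [chiR_of_mem h]
  · rw [chiR_of_not_mem h]; norm_num

lemma measurable_chiR {s : Set E} (hs : MeasurableSet s) : Measurable (chiR s) :=
  measurable_const.indicator hs

variable {J : Type*} [Fintype J]

/-- sum of indicators over a tuple -/
def sS (B : Set E) (v : J → E) : ℝ := ∑ j, chiR B (v j)

/-- normalized centered sum -/
def yY (B : ℕ → Set E) (p : ℕ → ℝ) (N : ℕ) (l : ℕ) (v : J → E) : ℝ :=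
  (sS (B l) v - N * p l) / (N * (1 - p l))

/-- running max of |yY| -/
def mM (B : ℕ → Set E) (p : ℕ → ℝ) (N : ℕ) : ℕ → (J → E) → ℝ
  | 0 => fun v => |yY B p N 0 v|
  | (l+1) => fun v => max (mM B p N l v) |yY B p N (l+1) v|

lemma sS_nonneg (B : Set E) (v : J → E) : 0 ≤ sS B v :=
  Finset.sum_nonneg fun j _ => chiR_nonneg _ _

lemma sS_le_card (B : Set E) (v : J → E) : sS B v ≤ Fintype.card J := by
  calc sS B v ≤ ∑ _j : J, (1:ℝ) := Finset.sum_le_sum fun j _ => chiR_le_one _ _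
  _ = Fintype.card J := by simp

lemma measurable_sS {B : Set E} (hB : MeasurableSet B) : Measurable (sS B : (J → E) → ℝ) :=
  Finset.measurable_sum _ fun j _ => (measurable_chiR hB).comp (measurable_pi_apply j)

lemma measurable_yY {B : ℕ → Set E} (p : ℕ → ℝ) (N : ℕ) (l : ℕ)
    (hB : MeasurableSet (B l)) : Measurable (yY B p N l : (J → E) → ℝ) :=
  ((measurable_sS hB).sub measurable_const).div_const _

lemma measurable_mM {B : ℕ → Set E} (p : ℕ → ℝ) (N : ℕ)
    (hB : ∀ k, MeasurableSet (B k)) (l : ℕ) :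
    Measurable (mM B p N l : (J → E) → ℝ) := by
  induction l with
  | zero => exact (measurable_yY p N 0 (hB 0)).abs
  | succ l ih => exact Measurable.max ih (measurable_yY p N (l+1) (hB (l+1))).abs

lemma abs_yY_le {B : ℕ → Set E} {p : ℕ → ℝ} {N : ℕ} {l : ℕ}
    (hN : 1 ≤ N) (hcard : Fintype.card J ≤ N)
    (h0 : 0 ≤ p l) (h1 : p l ≤ 1/2) (v : J → E) :
    |yY B p N l v| ≤ 4 := by
  have hNpos : (0:ℝ) < N := by exact_mod_cast hN
  have h2 : (0:ℝ) < 1 - p l := by linarith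
  have hs0 := sS_nonneg (B l) v
  have hs1 : sS (B l) v ≤ N := le_trans (sS_le_card _ _) (by exact_mod_cast hcard)
  have hnum : |sS (B l) v - N * p l| ≤ 2 * N := by
    rw [abs_le]; constructor <;> nlinarith
  have hden : N * (1/2 : ℝ) ≤ N * (1 - p l) := by nlinarith
  have hden2 : (0:ℝ) < N * (1 - p l) := by positivity
  rw [yY, abs_div, abs_of_pos hden2, div_le_iff₀ hden2]
  nlinarith

lemma mM_nonneg (B : ℕ → Set E) (p : ℕ → ℝ) (N : ℕ) (l : ℕ) (v : J → E) :
    0 ≤ mM B p N l v := by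
  cases l with
  | zero => exact abs_nonneg _
  | succ l => exact le_trans (abs_nonneg _) (le_max_right _ _)

lemma abs_yY_le_mM {B : ℕ → Set E} {p : ℕ → ℝ} {N : ℕ} {l n : ℕ}
    (hl : l ≤ n) (v : J → E) : |yY B p N l v| ≤ mM B p N n v := by
  induction n with
  | zero => rw [Nat.le_zero] at hl; subst hl; exact le_refl _
  | succ n ih =>
    rcases eq_or_lt_of_le hl with h | h
    · subst h; exact le_max_right _ _
    · exact le_trans (ih (Nat.lt_succ_iff.mp h)) (le_max_left _ _)

lemma mM_le {B : ℕ → Set E} {p : ℕ → ℝ} {N : ℕ} {n : ℕ}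
    (hN : 1 ≤ N) (hcard : Fintype.card J ≤ N)
    (h0 : ∀ k, k ≤ n → 0 ≤ p k) (h1 : ∀ k, k ≤ n → p k ≤ 1/2) (v : J → E) :
    mM B p N n v ≤ 4 := by
  induction n with
  | zero => exact abs_yY_le hN hcard (h0 0 le_rfl) (h1 0 le_rfl) v
  | succ n ih =>
    refine max_le (ih (fun k hk => h0 k (le_trans hk (Nat.le_succ n)))
      (fun k hk => h1 k (le_trans hk (Nat.le_succ n)))) ?_
    exact abs_yY_le hN hcard (h0 _ le_rfl) (h1 _ le_rfl) v

/-- congruence for mM when yY values agree up to k -/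
lemma mM_eq_of_yY_eq {J' : Type*} [Fintype J'] {B : ℕ → Set E} {p : ℕ → ℝ} {N : ℕ}
    {v : J → E} {w : J' → E} {k : ℕ}
    (h : ∀ l, l ≤ k → yY B p N l v = yY B p N l w) :
    mM B p N k v = mM B p N k w := by
  induction k with
  | zero => simp only [mM, h 0 le_rfl]
  | succ k ih =>
    simp only [mM]
    rw [ih (fun l hl => h l (le_trans hl (Nat.le_succ k))), h (k+1) le_rfl]

/-- the deterministic pathwise Doob helper -/
lemma det_Q (y : ℕ → ℝ) (hy : ∀ l, 0 ≤ y l) (h0 : y 0 = 0)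
    (m : ℕ → ℝ) (hm0 : m 0 = y 0) (hms : ∀ l, m (l+1) = max (m l) (y (l+1)))
    (hmy : ∀ l, y l ≤ m l) (n : ℕ) :
    ∑ k ∈ Finset.range n, m k * (y (k+1) - y k) ≤ m n * y n - m n ^ 2 / 2 := by
  induction n with
  | zero => simp [hm0, h0]
  | succ n ih =>
    rw [Finset.sum_range_succ]
    have key : m n * y (n+1) - m n ^ 2 / 2 ≤ m (n+1) * y (n+1) - m (n+1) ^ 2 / 2 := by
      rw [hms n]
      rcases max_cases (m n) (y (n+1)) with ⟨he, _⟩ | ⟨he, hlt⟩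
      · rw [he]
      · rw [he]; nlinarith [hy (n+1)]
    nlinarith [ih]

lemma det_doob (y : ℕ → ℝ) (hy : ∀ l, 0 ≤ y l) (h0 : y 0 = 0)
    (m : ℕ → ℝ) (hm0 : m 0 = y 0) (hms : ∀ l, m (l+1) = max (m l) (y (l+1)))
    (hmy : ∀ l, y l ≤ m l) (n : ℕ) :
    m n ^ 2 ≤ 4 * y n ^ 2 - 4 * ∑ k ∈ Finset.range n, m k * (y (k+1) - y k) := by
  have hQ := det_Q y hy h0 m hm0 hms hmy n
  nlinarith [hQ, sq_nonneg (m n - 2 * y n)]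

lemma sgn_mul_self (r : ℝ) : Real.sign r * r = |r| := by
  rcases lt_trichotomy r 0 with h | h | h
  · rw [Real.sign_of_neg h, abs_of_neg h]; ring
  · simp [h]
  · rw [Real.sign_of_pos h, abs_of_pos h]; ring

lemma hmy_of_mM {B : ℕ → Set E} {p : ℕ → ℝ} {N : ℕ} (v : J → E) :
    ∀ l, |yY B p N l v| ≤ mM B p N l v := fun l => abs_yY_le_mM le_rfl v

end DKW
noncomputable section Prob

variable {Ω : Type*} [MeasurableSpace Ω] {E : Type*} [MeasurableSpace E]

noncomputable def sgn (r : ℝ) : ℝ := if r < 0 then -1 else if 0 < r then 1 else 0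

lemma sgn_mul (r : ℝ) : sgn r * r = |r| := by
  unfold sgn
  rcases lt_trichotomy r 0 with h | h | h
  · rw [if_pos h, abs_of_neg h]; ring
  · simp [h]
  · rw [if_neg (by linarith), if_pos h, abs_of_pos h]; ring

lemma abs_sgn_le (r : ℝ) : |sgn r| ≤ 1 := by
  unfold sgn
  split
  · rw [abs_neg, abs_one]
  · split
    · rw [abs_one]
    · simp

lemma measurable_sgn : Measurable sgn := by
  unfold sgn
  exact Measurable.ite (measurableSet_lt measurable_id measurable_const) measurable_const
    (Measurable.ite (measurableSet_lt measurable_const measurable_id) measurable_const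
      measurable_const)

lemma intb {μ : Measure Ω} [IsFiniteMeasure μ] {f : Ω → ℝ} {C : ℝ}
    (hf : Measurable f) (h : ∀ ω, |f ω| ≤ C) : Integrable f μ :=
  (integrable_const C).mono' hf.aestronglyMeasurable
    (Filter.Eventually.of_forall (fun ω => by simpa [Real.norm_eq_abs] using h ω))

lemma integral_chiR {μ : Measure Ω} {ρ : Measure E} {X : Ω → E} {s : Set E}
    (hX : Measurable X) (hlawX : Measure.map X μ = ρ) (hs : MeasurableSet s) :
    ∫ ω, chiR s (X ω) ∂μ = (ρ s).toReal := by
  have h1 : (fun ω => chiR s (X ω)) = (X ⁻¹' s).indicator (fun _ => (1:ℝ)) := by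
    funext ω; by_cases h : X ω ∈ s <;> simp [chiR, Set.indicator, h]
  rw [h1, integral_indicator_const (1:ℝ) (hX hs), ← hlawX, Measure.map_apply hX hs]
  simp [Measure.real]

variable {N : ℕ}

def tup (X : Fin N → Ω → E) (ω : Ω) : Fin N → E := fun i => X i ω

def tupC (X : Fin N → Ω → E) (i : Fin N) (ω : Ω) : ↥(({i} : Finset (Fin N))ᶜ) → E :=
  fun j => X j ω

lemma measurable_tup {X : Fin N → Ω → E} (hmeas : ∀ i, Measurable (X i)) :
    Measurable (tup X) := measurable_pi_lambda _ hmeas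

lemma measurable_tupC {X : Fin N → Ω → E} (hmeas : ∀ i, Measurable (X i)) (i : Fin N) :
    Measurable (tupC X i) := measurable_pi_lambda _ (fun j => hmeas j)

def pB (ρ : Measure E) (B : ℕ → Set E) (l : ℕ) : ℝ := (ρ (B l)).toReal

lemma pB_nonneg (ρ : Measure E) (B : ℕ → Set E) (l : ℕ) : 0 ≤ pB ρ B l :=
  ENNReal.toReal_nonneg

lemma pB_le_one (ρ : Measure E) [IsProbabilityMeasure ρ] (B : ℕ → Set E) (l : ℕ) :
    pB ρ B l ≤ 1 := by
  rw [pB]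
  calc (ρ (B l)).toReal ≤ (1 : ENNReal).toReal :=
        ENNReal.toReal_mono ENNReal.one_ne_top prob_le_one
  _ = 1 := ENNReal.toReal_one

def psiF (B : ℕ → Set E) (p : ℕ → ℝ) (N k : ℕ) (x : E) : ℝ :=
  (chiR (B (k+1)) x - p (k+1)) / (↑N * (1 - p (k+1))) - (chiR (B k) x - p k) / (↑N * (1 - p k))

lemma measurable_psiF {B : ℕ → Set E} (p : ℕ → ℝ) (N k : ℕ)
    (hmeasB : ∀ l, MeasurableSet (B l)) : Measurable (psiF B p N k) :=
  (((measurable_chiR (hmeasB _)).sub measurable_const).div_const _).sub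
    (((measurable_chiR (hmeasB _)).sub measurable_const).div_const _)

lemma abs_term_le {q : ℝ} (hN : 1 ≤ N) (h0 : 0 ≤ q) (h1 : q ≤ 1/2) (s : Set E) (x : E) :
    |(chiR s x - q) / (↑N * (1 - q))| ≤ 2 := by
  have hNpos : (1:ℝ) ≤ N := by exact_mod_cast hN
  have hden : (1/2 : ℝ) ≤ ↑N * (1 - q) := by nlinarith
  have hnum : |chiR s x - q| ≤ 1 := by
    rw [abs_le]; constructor
    · have := chiR_nonneg s x; linarith
    · have := chiR_le_one s x; linarith
  rw [abs_div, abs_of_pos (show (0:ℝ) < ↑N * (1 - q) by linarith),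
    div_le_iff₀ (by linarith)]
  nlinarith

lemma abs_psiF_le {B : ℕ → Set E} {p : ℕ → ℝ} {k : ℕ} (hN : 1 ≤ N)
    (h0a : 0 ≤ p k) (h1a : p k ≤ 1/2) (h0b : 0 ≤ p (k+1)) (h1b : p (k+1) ≤ 1/2) (x : E) :
    |psiF B p N k x| ≤ 4 := by
  rw [psiF]
  calc |_ - _| ≤ |(chiR (B (k+1)) x - p (k+1)) / (↑N * (1 - p (k+1)))|
      + |(chiR (B k) x - p k) / (↑N * (1 - p k))| := abs_sub _ _
  _ ≤ 2 + 2 := add_le_add (abs_term_le hN h0b h1b _ _) (abs_term_le hN h0a h1a _ _)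
  _ = 4 := by norm_num

lemma psiF_zero {B : ℕ → Set E} {p : ℕ → ℝ} {k : ℕ} (hN : 1 ≤ N)
    (hsub : B k ⊆ B (k+1)) (h1a : p k ≤ 1/2) (h1b : p (k+1) ≤ 1/2)
    {x : E} (hx : x ∈ B k) : psiF B p N k x = 0 := by
  have hNne : (N:ℝ) ≠ 0 := by positivity
  have e : ∀ q : ℝ, q ≤ 1/2 → (1 - q) / (↑N * (1 - q)) = 1/N := by
    intro q hq
    have : (1:ℝ) - q ≠ 0 := by linarith
    field_simp
  rw [psiF, chiR_of_mem (hsub hx), chiR_of_mem hx, e _ h1b, e _ h1a, sub_self]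

lemma yY_sub_eq_sum_psi {B : ℕ → Set E} (p : ℕ → ℝ) (k : ℕ) (v : Fin N → E) :
    yY B p N (k+1) v - yY B p N k v = ∑ j, psiF B p N k (v j) := by
  have h : ∀ l, yY B p N l v = ∑ j, (chiR (B l) (v j) - p l) / (↑N * (1 - p l)) := by
    intro l
    rw [yY, sS, ← Finset.sum_div, Finset.sum_sub_distrib]
    congr 2
    simp [Finset.card_univ]
  rw [h, h, ← Finset.sum_sub_distrib]
  rfl

end Prob
noncomputable section Orth

variable {Ω : Type*} [MeasurableSpace Ω] {E : Type*} [MeasurableSpace E]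

lemma abs_chiR_le (s : Set E) (x : E) : |chiR s x| ≤ 1 := by
  rw [abs_le]; exact ⟨by have := chiR_nonneg s x; linarith, chiR_le_one s x⟩

lemma B_chain {B : ℕ → Set E} {n : ℕ} (hmono : ∀ l, l < n → B l ⊆ B (l+1)) :
    ∀ l m, l ≤ m → m ≤ n → B l ⊆ B m := by
  intro l m hlm hmn
  induction m with
  | zero => rw [Nat.le_zero] at hlm; subst hlm; exact subset_rfl
  | succ m ih =>
    rcases eq_or_lt_of_le hlm with h | h
    · subst h; exact subset_rfl
    · exact subset_trans (ih (Nat.lt_succ_iff.mp h) (le_trans (Nat.le_succ m) hmn))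
        (hmono m (Nat.lt_of_succ_le hmn))

lemma orth {μ : Measure Ω} [IsProbabilityMeasure μ] {ρ : Measure E} [IsProbabilityMeasure ρ]
    {N : ℕ} (hN : 1 ≤ N) {X : Fin N → Ω → E} (hmeas : ∀ i, Measurable (X i))
    (hindep : iIndepFun X μ)
    (hlaw : ∀ i, Measure.map (X i) μ = ρ)
    {B : ℕ → Set E} (hmeasB : ∀ l, MeasurableSet (B l))
    {n : ℕ} (hmono : ∀ l, l < n → B l ⊆ B (l+1))
    (hp : ∀ l, l ≤ n → pB ρ B l ≤ 1/2)
    {k : ℕ} (hk : k < n) :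
    ∫ ω, (mM B (pB ρ B) N k (tup X ω) * sgn (yY B (pB ρ B) N k (tup X ω)))
        * (yY B (pB ρ B) N (k+1) (tup X ω) - yY B (pB ρ B) N k (tup X ω)) ∂μ = 0 := by
  set p := pB ρ B with hp_def
  have hp0 : ∀ l, 0 ≤ p l := pB_nonneg ρ B
  have hpk : p k ≤ 1/2 := hp k (le_of_lt hk)
  have hpk1 : p (k+1) ≤ 1/2 := hp (k+1) hk
  have hcard : Fintype.card (Fin N) ≤ N := by simp
  set G : Ω → ℝ := fun ω => mM B p N k (tup X ω) * sgn (yY B p N k (tup X ω)) with hG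
  have measG : Measurable G :=
    ((measurable_mM p N hmeasB k).comp (measurable_tup hmeas)).mul
      (measurable_sgn.comp ((measurable_yY p N k (hmeasB k)).comp (measurable_tup hmeas)))
  have boundG : ∀ ω, |G ω| ≤ 4 := by
    intro ω
    rw [hG]
    simp only []
    rw [abs_mul]
    have h1 : |mM B p N k (tup X ω)| ≤ 4 := by
      rw [abs_of_nonneg (mM_nonneg _ _ _ _ _)]
      exact mM_le hN hcard (fun l _ => hp0 l) (fun l hl => hp l (le_trans hl (le_of_lt hk))) _
    nlinarith [abs_sgn_le (yY B p N k (tup X ω)), abs_nonneg (mM B p N k (tup X ω)),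
      abs_nonneg (sgn (yY B p N k (tup X ω)))]
  have measψ : ∀ i : Fin N, Measurable (fun ω => psiF B p N k (X i ω)) :=
    fun i => (measurable_psiF p N k hmeasB).comp (hmeas i)
  have boundψ : ∀ (i : Fin N) ω, |psiF B p N k (X i ω)| ≤ 4 :=
    fun i ω => abs_psiF_le hN (hp0 k) hpk (hp0 (k+1)) hpk1 _
  have key : ∀ i : Fin N, ∫ ω, G ω * psiF B p N k (X i ω) ∂μ = 0 := by
    intro i
    set Gi : Ω → ℝ := fun ω => mM B p N k (tupC X i ω) * sgn (yY B p N k (tupC X i ω)) with hGi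
    have hGG : ∀ ω, G ω * psiF B p N k (X i ω) = Gi ω * psiF B p N k (X i ω) := by
      intro ω
      by_cases hx : X i ω ∈ B k
      · rw [psiF_zero hN (hmono k hk) hpk hpk1 hx, mul_zero, mul_zero]
      · have hyy : ∀ l, l ≤ k → yY B p N l (tup X ω) = yY B p N l (tupC X i ω) := by
          intro l hl
          have hxl : X i ω ∉ B l := fun hm => hx (B_chain hmono l k hl (le_of_lt hk) hm)
          have hss : sS (B l) (tup X ω) = sS (B l) (tupC X i ω) := by
            rw [sS, Fintype.sum_eq_add_sum_compl i (fun j => chiR (B l) (tup X ω j))]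
            rw [show chiR (B l) (tup X ω i) = 0 from chiR_of_not_mem hxl, zero_add,
              ← Finset.sum_coe_sort]
            rfl
          rw [yY, yY, hss]
        have : G ω = Gi ω := by
          rw [hG, hGi]
          simp only []
          rw [mM_eq_of_yY_eq hyy, hyy k le_rfl]
        rw [this]
    have measGi : Measurable Gi :=
      ((measurable_mM p N hmeasB k).comp (measurable_tupC hmeas i)).mul
        (measurable_sgn.comp ((measurable_yY p N k (hmeasB k)).comp (measurable_tupC hmeas i)))
    have hcard' : Fintype.card ↥(({i} : Finset (Fin N))ᶜ) ≤ N := by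
      rw [Fintype.card_coe]
      calc (({i} : Finset (Fin N))ᶜ).card ≤ Fintype.card (Fin N) := Finset.card_le_univ _
      _ = N := by simp
    have boundGi : ∀ ω, |Gi ω| ≤ 4 := by
      intro ω
      rw [hGi]
      simp only []
      rw [abs_mul]
      have h1 : |mM B p N k (tupC X i ω)| ≤ 4 := by
        rw [abs_of_nonneg (mM_nonneg _ _ _ _ _)]
        exact mM_le hN hcard' (fun l _ => hp0 l)
          (fun l hl => hp l (le_trans hl (le_of_lt hk))) _
      nlinarith [abs_sgn_le (yY B p N k (tupC X i ω)), abs_nonneg (mM B p N k (tupC X i ω)),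
        abs_nonneg (sgn (yY B p N k (tupC X i ω)))]
    have hind : IndepFun Gi (fun ω => psiF B p N k (X i ω)) μ := by
      have h1 := hindep.indepFun_finset (({i} : Finset (Fin N))ᶜ) {i} disjoint_compl_left hmeas
      have h2 := h1.comp
        (φ := fun v : (↥(({i} : Finset (Fin N))ᶜ) → E) => mM B p N k v * sgn (yY B p N k v))
        (ψ := fun v : (↥({i} : Finset (Fin N)) → E) =>
          psiF B p N k (v ⟨i, Finset.mem_singleton_self i⟩))
        ((measurable_mM p N hmeasB k).mul (measurable_sgn.comp (measurable_yY p N k (hmeasB k))))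
        ((measurable_psiF p N k hmeasB).comp (measurable_pi_apply _))
      exact h2
    have intGi : Integrable Gi μ := intb measGi boundGi
    have intψ : Integrable (fun ω => psiF B p N k (X i ω)) μ := intb (measψ i) (boundψ i)
    have hmul := hind.integral_mul_eq_mul_integral intGi.aestronglyMeasurable intψ.aestronglyMeasurable
    rw [show (Gi * fun ω => psiF B p N k (X i ω)) = fun ω => Gi ω * psiF B p N k (X i ω)
      from rfl] at hmul
    have hchi : ∀ l, ∫ ω, chiR (B l) (X i ω) ∂μ = p l :=
      fun l => integral_chiR (hmeas i) (hlaw i) (hmeasB l)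
    have hterm : ∀ l, 0 ≤ p l → p l ≤ 1/2 →
        ∫ ω, (chiR (B l) (X i ω) - p l) / (↑N * (1 - p l)) ∂μ = 0 := by
      intro l h0 h1
      have intchi : Integrable (fun ω => chiR (B l) (X i ω)) μ :=
        intb ((measurable_chiR (hmeasB l)).comp (hmeas i)) (fun ω => abs_chiR_le (B l) (X i ω))
      rw [integral_div, integral_sub intchi (integrable_const _), hchi, integral_const]
      simp
    have hψ0 : ∫ ω, psiF B p N k (X i ω) ∂μ = 0 := by
      have hrw : (fun ω => psiF B p N k (X i ω)) =
          fun ω => (chiR (B (k+1)) (X i ω) - p (k+1)) / (↑N * (1 - p (k+1)))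
            - (chiR (B k) (X i ω) - p k) / (↑N * (1 - p k)) := rfl
      have int1 : Integrable
          (fun ω => (chiR (B (k+1)) (X i ω) - p (k+1)) / (↑N * (1 - p (k+1)))) μ :=
        intb ((((measurable_chiR (hmeasB _)).comp (hmeas i)).sub measurable_const).div_const _)
          (fun ω => abs_term_le hN (hp0 (k+1)) hpk1 _ _)
      have int2 : Integrable
          (fun ω => (chiR (B k) (X i ω) - p k) / (↑N * (1 - p k))) μ :=
        intb ((((measurable_chiR (hmeasB _)).comp (hmeas i)).sub measurable_const).div_const _)
          (fun ω => abs_term_le hN (hp0 k) hpk _ _)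
      rw [hrw, integral_sub int1 int2,
        hterm (k+1) (hp0 _) hpk1, hterm k (hp0 _) hpk, sub_zero]
    rw [show (fun ω => G ω * psiF B p N k (X i ω)) = fun ω => Gi ω * psiF B p N k (X i ω)
      from funext hGG, hmul, hψ0, mul_zero]
  calc ∫ ω, G ω * (yY B p N (k+1) (tup X ω) - yY B p N k (tup X ω)) ∂μ
      = ∫ ω, ∑ i, G ω * psiF B p N k (X i ω) ∂μ := by
        congr 1; funext ω
        rw [yY_sub_eq_sum_psi p k (tup X ω), Finset.mul_sum]
        rfl
  _ = ∑ i, ∫ ω, G ω * psiF B p N k (X i ω) ∂μ := by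
        refine integral_finset_sum _ (fun i _ => intb (measG.mul (measψ i)) (C := 16) ?_)
        intro ω
        rw [abs_mul]
        nlinarith [boundG ω, boundψ i ω, abs_nonneg (G ω), abs_nonneg (psiF B p N k (X i ω))]
  _ = 0 := Finset.sum_eq_zero (fun i _ => key i)

end Orth
noncomputable section Core

variable {Ω : Type*} [MeasurableSpace Ω] {E : Type*} [MeasurableSpace E]

lemma chiR_sq (s : Set E) (x : E) : chiR s x ^ 2 = chiR s x := by
  by_cases h : x ∈ s
  · rw [chiR_of_mem h]; norm_num
  · rw [chiR_of_not_mem h]; norm_num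

lemma varlem {μ : Measure Ω} [IsProbabilityMeasure μ] {ρ : Measure E} [IsProbabilityMeasure ρ]
    {N : ℕ} (hN : 1 ≤ N) {X : Fin N → Ω → E} (hmeas : ∀ i, Measurable (X i))
    (hindep : iIndepFun X μ)
    (hlaw : ∀ i, Measure.map (X i) μ = ρ)
    {B : ℕ → Set E} (hmeasB : ∀ l, MeasurableSet (B l)) (n : ℕ)
    (hple : pB ρ B n ≤ 1/2) :
    ∫ ω, (yY B (pB ρ B) N n (tup X ω))^2 ∂μ ≤ 1/N := by
  set q := pB ρ B n with hq_def
  have hq0 : 0 ≤ q := pB_nonneg ρ B n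
  have hq1 : q ≤ 1 := pB_le_one ρ B n
  have hN1 : (1:ℝ) ≤ N := by exact_mod_cast hN
  set Z : Fin N → Ω → ℝ := fun i ω => chiR (B n) (X i ω) - q with hZ
  have measZ : ∀ i, Measurable (Z i) :=
    fun i => ((measurable_chiR (hmeasB n)).comp (hmeas i)).sub measurable_const
  have boundZ : ∀ i ω, |Z i ω| ≤ 2 := by
    intro i ω
    rw [hZ]
    simp only []
    rw [abs_le]
    constructor
    · have := chiR_nonneg (B n) (X i ω); linarith
    · have := chiR_le_one (B n) (X i ω); linarith
  have intZ : ∀ i, Integrable (Z i) μ := fun i => intb (measZ i) (boundZ i)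
  have hZ0 : ∀ i, ∫ ω, Z i ω ∂μ = 0 := by
    intro i
    have intchi : Integrable (fun ω => chiR (B n) (X i ω)) μ :=
      intb ((measurable_chiR (hmeasB n)).comp (hmeas i)) (fun ω => abs_chiR_le (B n) (X i ω))
    rw [hZ]
    simp only []
    rw [integral_sub intchi (integrable_const _),
      integral_chiR (hmeas i) (hlaw i) (hmeasB n), integral_const]
    simp only [measure_univ, probReal_univ, ENNReal.toReal_one, smul_eq_mul, one_mul]
    rw [hq_def, pB, sub_self]
  have intZZ : ∀ i j, Integrable (fun ω => Z i ω * Z j ω) μ := by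
    intro i j
    refine intb ((measZ i).mul (measZ j)) (C := 4) (fun ω => ?_)
    rw [abs_mul]
    nlinarith [boundZ i ω, boundZ j ω, abs_nonneg (Z i ω), abs_nonneg (Z j ω)]
  have hcross : ∀ i j, i ≠ j → ∫ ω, Z i ω * Z j ω ∂μ = 0 := by
    intro i j hij
    have hf : Measurable (fun x : E => chiR (B n) x - q) :=
      (measurable_chiR (hmeasB n)).sub measurable_const
    have hind : IndepFun (Z i) (Z j) μ := (hindep.indepFun hij).comp hf hf
    have := hind.integral_mul_eq_mul_integral (intZ i).aestronglyMeasurable (intZ j).aestronglyMeasurable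
    rw [show (Z i * Z j) = fun ω => Z i ω * Z j ω from rfl] at this
    rw [this, hZ0, zero_mul]
  have hdiag : ∀ i : Fin N, ∫ ω, Z i ω * Z i ω ∂μ = q - q^2 := by
    intro i
    have hpt : (fun ω => Z i ω * Z i ω)
        = fun ω => (chiR (B n) (X i ω) - 2*q*chiR (B n) (X i ω)) + q^2 := by
      funext ω
      rw [hZ]
      simp only []
      have := chiR_sq (B n) (X i ω)
      nlinarith [this]
    have intchi : Integrable (fun ω => chiR (B n) (X i ω)) μ :=
      intb ((measurable_chiR (hmeasB n)).comp (hmeas i)) (fun ω => abs_chiR_le (B n) (X i ω))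
    have int1 : Integrable (fun ω => chiR (B n) (X i ω) - 2*q*chiR (B n) (X i ω)) μ :=
      intchi.sub (intchi.const_mul _)
    rw [hpt, integral_add int1 (integrable_const _),
      integral_sub intchi (intchi.const_mul _), integral_const_mul,
      integral_chiR (hmeas i) (hlaw i) (hmeasB n), integral_const]
    simp only [measure_univ, probReal_univ, ENNReal.toReal_one, smul_eq_mul, one_mul]
    rw [hq_def, pB]
    ring
  have hsum : ∫ ω, (∑ i, Z i ω)^2 ∂μ = N * (q - q^2) := by
    have hpt : ∀ ω, (∑ i, Z i ω)^2 = ∑ i, ∑ j, Z i ω * Z j ω := by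
      intro ω
      rw [sq, Finset.sum_mul_sum]
    calc ∫ ω, (∑ i, Z i ω)^2 ∂μ = ∫ ω, ∑ i, ∑ j, Z i ω * Z j ω ∂μ := by
          congr 1; funext ω; exact hpt ω
    _ = ∑ i, ∫ ω, ∑ j, Z i ω * Z j ω ∂μ :=
          integral_finset_sum _ (fun i _ => integrable_finset_sum _ (fun j _ => intZZ i j))
    _ = ∑ i : Fin N, (q - q^2) := by
          refine Finset.sum_congr rfl (fun i _ => ?_)
          rw [integral_finset_sum _ (fun j _ => intZZ i j)]
          rw [Finset.sum_eq_single i (fun j _ hji => hcross i j (Ne.symm hji))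
            (fun h => absurd (Finset.mem_univ i) h)]
          exact hdiag i
    _ = N * (q - q^2) := by simp [Finset.card_univ]; ring
  have hYpt : (fun ω => (yY B (pB ρ B) N n (tup X ω))^2)
      = fun ω => (∑ i, Z i ω)^2 / (↑N * (1 - q))^2 := by
    funext ω
    rw [yY, div_pow]
    congr 2
    rw [sS, hZ]
    simp only []
    rw [Finset.sum_sub_distrib, hq_def, pB]
    simp only [Finset.sum_const, Finset.card_univ, Fintype.card_fin, nsmul_eq_mul]
    rfl
  rw [hYpt, integral_div, hsum]
  have hden : (0:ℝ) < ↑N * (1 - q) := by nlinarith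
  rw [div_le_div_iff₀ (by positivity) (by positivity)]
  nlinarith

lemma core {μ : Measure Ω} [IsProbabilityMeasure μ] {ρ : Measure E} [IsProbabilityMeasure ρ]
    {N : ℕ} (hN : 1 ≤ N) {X : Fin N → Ω → E} (hmeas : ∀ i, Measurable (X i))
    (hindep : iIndepFun X μ)
    (hlaw : ∀ i, Measure.map (X i) μ = ρ)
    {B : ℕ → Set E} (hmeasB : ∀ l, MeasurableSet (B l)) {n : ℕ} (hB0 : B 0 = ∅)
    (hmono : ∀ l, l < n → B l ⊆ B (l+1)) (hp : ∀ l, l ≤ n → pB ρ B l ≤ 1/2) :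
    ∫ ω, (mM B (pB ρ B) N n (tup X ω))^2 ∂μ ≤ 4/N := by
  set p := pB ρ B with hp_def
  have hp0 : ∀ l, 0 ≤ p l := pB_nonneg ρ B
  have hN1 : (1:ℝ) ≤ N := by exact_mod_cast hN
  have hcard : Fintype.card (Fin N) ≤ N := by simp
  have hY0 : ∀ (v : Fin N → E), yY B p N 0 v = 0 := by
    intro v
    rw [yY, sS]
    have h1 : ∀ j : Fin N, chiR (B 0) (v j) = 0 := by
      intro j; rw [hB0]; exact chiR_of_not_mem (Set.notMem_empty _)
    have h2 : p 0 = 0 := by rw [hp_def, pB, hB0]; simp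
    rw [Finset.sum_congr rfl (fun j _ => h1 j)]
    simp [h2]
  -- measurability / bounds
  have measY : ∀ l, Measurable (fun ω => yY B p N l (tup X ω)) :=
    fun l => (measurable_yY p N l (hmeasB l)).comp (measurable_tup hmeas)
  have measM : ∀ l, Measurable (fun ω => mM B p N l (tup X ω)) :=
    fun l => (measurable_mM p N hmeasB l).comp (measurable_tup hmeas)
  have boundY : ∀ l, l ≤ n → ∀ ω, |yY B p N l (tup X ω)| ≤ 4 :=
    fun l hl ω => abs_yY_le hN hcard (hp0 l) (hp l hl) _
  have boundM : ∀ l, l ≤ n → ∀ ω, |mM B p N l (tup X ω)| ≤ 4 := by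
    intro l hl ω
    rw [abs_of_nonneg (mM_nonneg _ _ _ _ _)]
    exact mM_le hN hcard (fun j _ => hp0 j) (fun j hj => hp j (le_trans hj hl)) _
  -- pointwise deterministic inequality
  have det : ∀ ω, (mM B p N n (tup X ω))^2 ≤ 4*(yY B p N n (tup X ω))^2
      - 4 * ∑ k ∈ Finset.range n, mM B p N k (tup X ω) *
          (|yY B p N (k+1) (tup X ω)| - |yY B p N k (tup X ω)|) := by
    intro ω
    have h0 : |yY B p N 0 (tup X ω)| = 0 := by rw [hY0]; exact abs_zero
    have hdd := det_doob (fun l => |yY B p N l (tup X ω)|) (fun l => abs_nonneg _) h0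
      (fun l => mM B p N l (tup X ω)) rfl (fun l => rfl) (hmy_of_mM _) n
    rw [← sq_abs (yY B p N n (tup X ω))]
    exact hdd
  -- nonnegativity of the martingale correction terms
  have intMY : ∀ k l, k ≤ n → l ≤ n → Integrable (fun ω =>
      mM B p N k (tup X ω) * |yY B p N l (tup X ω)|) μ := by
    intro k l hkn hl
    refine intb ((measM k).mul (measY l).abs) (C := 16) (fun ω => ?_)
    rw [abs_mul, abs_abs]
    nlinarith [boundM k hkn ω, boundY l hl ω, abs_nonneg (mM B p N k (tup X ω)),
      abs_nonneg (yY B p N l (tup X ω))]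
  have intMterm : ∀ k, k < n → Integrable (fun ω => mM B p N k (tup X ω) *
      (|yY B p N (k+1) (tup X ω)| - |yY B p N k (tup X ω)|)) μ := by
    intro k hk
    exact ((intMY k (k+1) (le_of_lt hk) hk).sub (intMY k k (le_of_lt hk) (le_of_lt hk))).congr
      (Filter.Eventually.of_forall (fun ω => by simp only [Pi.sub_apply]; ring))

  have hpos : ∀ k, k < n → 0 ≤ ∫ ω, mM B p N k (tup X ω) *
      (|yY B p N (k+1) (tup X ω)| - |yY B p N k (tup X ω)|) ∂μ := by
    intro k hk
    have hkn : k ≤ n := le_of_lt hk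
    have hkn1 : k + 1 ≤ n := hk
    have intGY : ∀ l, l ≤ n → Integrable (fun ω =>
        (mM B p N k (tup X ω) * sgn (yY B p N k (tup X ω))) * yY B p N l (tup X ω)) μ := by
      intro l hl
      refine intb (((measM k).mul (measurable_sgn.comp (measY k))).mul (measY l))
        (C := 64) (fun ω => ?_)
      rw [abs_mul, abs_mul]
      have h1 : |mM B p N k (tup X ω)| * |sgn (yY B p N k (tup X ω))| ≤ 4 * 1 :=
        mul_le_mul (boundM k hkn ω) (abs_sgn_le _) (abs_nonneg _) (by norm_num)
      have h2 : |mM B p N k (tup X ω)| * |sgn (yY B p N k (tup X ω))| * |yY B p N l (tup X ω)|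
          ≤ (4*1) * 4 :=
        mul_le_mul h1 (boundY l hl ω) (abs_nonneg _) (by norm_num)
      linarith
    have horth := orth hN hmeas hindep hlaw hmeasB hmono hp hk
    rw [show (fun ω => (mM B p N k (tup X ω) * sgn (yY B p N k (tup X ω)))
          * (yY B p N (k+1) (tup X ω) - yY B p N k (tup X ω)))
        = fun ω => (mM B p N k (tup X ω) * sgn (yY B p N k (tup X ω))) * yY B p N (k+1) (tup X ω)
          - (mM B p N k (tup X ω) * sgn (yY B p N k (tup X ω))) * yY B p N k (tup X ω)
        from funext (fun ω => by ring)] at horth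
    rw [integral_sub (intGY (k+1) hkn1) (intGY k hkn), sub_eq_zero] at horth
    have heq2 : ∫ ω, (mM B p N k (tup X ω) * sgn (yY B p N k (tup X ω))) * yY B p N k (tup X ω) ∂μ
        = ∫ ω, mM B p N k (tup X ω) * |yY B p N k (tup X ω)| ∂μ := by
      congr 1; funext ω
      rw [mul_assoc, sgn_mul]
    have hle : ∫ ω, (mM B p N k (tup X ω) * sgn (yY B p N k (tup X ω)))
          * yY B p N (k+1) (tup X ω) ∂μ
        ≤ ∫ ω, mM B p N k (tup X ω) * |yY B p N (k+1) (tup X ω)| ∂μ := by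
      refine integral_mono (intGY (k+1) hkn1) (intMY k (k+1) hkn hkn1) (fun ω => ?_)
      have h1 := abs_sgn_le (yY B p N k (tup X ω))
      have h2 := mM_nonneg B p N k (tup X ω)
      have h3 : sgn (yY B p N k (tup X ω)) * yY B p N (k+1) (tup X ω)
          ≤ |yY B p N (k+1) (tup X ω)| := by
        calc sgn (yY B p N k (tup X ω)) * yY B p N (k+1) (tup X ω)
            ≤ |sgn (yY B p N k (tup X ω)) * yY B p N (k+1) (tup X ω)| := le_abs_self _
        _ = |sgn (yY B p N k (tup X ω))| * |yY B p N (k+1) (tup X ω)| := abs_mul _ _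
        _ ≤ 1 * |yY B p N (k+1) (tup X ω)| := by
            exact mul_le_mul_of_nonneg_right h1 (abs_nonneg _)
        _ = |yY B p N (k+1) (tup X ω)| := one_mul _
      calc (mM B p N k (tup X ω) * sgn (yY B p N k (tup X ω))) * yY B p N (k+1) (tup X ω)
          = mM B p N k (tup X ω) * (sgn (yY B p N k (tup X ω)) * yY B p N (k+1) (tup X ω)) := by
            ring
      _ ≤ mM B p N k (tup X ω) * |yY B p N (k+1) (tup X ω)| :=
            mul_le_mul_of_nonneg_left h3 h2
    have hsub := integral_sub (intMY k (k+1) hkn hkn1) (intMY k k hkn hkn)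
    rw [show (fun ω => mM B p N k (tup X ω) * |yY B p N (k+1) (tup X ω)|
          - mM B p N k (tup X ω) * |yY B p N k (tup X ω)|)
        = fun ω => mM B p N k (tup X ω) * (|yY B p N (k+1) (tup X ω)|
          - |yY B p N k (tup X ω)|) from funext (fun ω => by ring)] at hsub
    rw [hsub, ← heq2, ← horth]
    linarith [hle]
  -- integrate the deterministic inequality
  have intM2 : Integrable (fun ω => (mM B p N n (tup X ω))^2) μ := by
    refine intb ((measM n).pow_const 2) (C := 16) (fun ω => ?_)
    rw [abs_pow]
    nlinarith [boundM n le_rfl ω, abs_nonneg (mM B p N n (tup X ω))]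
  have intY2 : Integrable (fun ω => (yY B p N n (tup X ω))^2) μ := by
    refine intb ((measY n).pow_const 2) (C := 16) (fun ω => ?_)
    rw [abs_pow]
    nlinarith [boundY n le_rfl ω, abs_nonneg (yY B p N n (tup X ω))]
  have intSum : Integrable (fun ω => ∑ k ∈ Finset.range n, mM B p N k (tup X ω) *
      (|yY B p N (k+1) (tup X ω)| - |yY B p N k (tup X ω)|)) μ :=
    integrable_finset_sum _ (fun k hk => intMterm k (Finset.mem_range.mp hk))
  have intRHS : Integrable (fun ω => 4*(yY B p N n (tup X ω))^2
      - 4 * ∑ k ∈ Finset.range n, mM B p N k (tup X ω) *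
          (|yY B p N (k+1) (tup X ω)| - |yY B p N k (tup X ω)|)) μ :=
    ((intY2.const_mul 4).sub (intSum.const_mul 4)).congr
      (Filter.Eventually.of_forall (fun ω => rfl))
  have hint := integral_mono intM2 intRHS det
  rw [integral_sub (intY2.const_mul 4) (intSum.const_mul 4), integral_const_mul,
    integral_const_mul,
    integral_finset_sum _ (fun k hk => intMterm k (Finset.mem_range.mp hk))] at hint
  have hsum_nonneg : 0 ≤ ∑ k ∈ Finset.range n, ∫ ω, mM B p N k (tup X ω) *
      (|yY B p N (k+1) (tup X ω)| - |yY B p N k (tup X ω)|) ∂μ :=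
    Finset.sum_nonneg (fun k hk => hpos k (Finset.mem_range.mp hk))
  have hvar := varlem hN hmeas hindep hlaw hmeasB n (hp n le_rfl)
  calc ∫ ω, (mM B p N n (tup X ω))^2 ∂μ
      ≤ 4 * ∫ ω, (yY B p N n (tup X ω))^2 ∂μ := by linarith
  _ ≤ 4 * (1/N) := by linarith
  _ = 4/N := by ring

end Core
noncomputable section Grid

variable {Ω : Type*} [MeasurableSpace Ω]
variable {E : Type*} [MetricSpace E] [MeasurableSpace E] [OpensMeasurableSpace E]

lemma chiR_compl (s : Set E) (x : E) : chiR sᶜ x = 1 - chiR s x := by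
  by_cases h : x ∈ s
  · rw [chiR_of_mem h, chiR_of_not_mem (show x ∉ sᶜ by simp [h])]; norm_num
  · rw [chiR_of_not_mem h, chiR_of_mem (Set.mem_compl h)]; norm_num

lemma sS_compl {N : ℕ} (s : Set E) (v : Fin N → E) : sS sᶜ v = N - sS s v := by
  rw [sS, sS]
  rw [Finset.sum_congr rfl (fun j _ => chiR_compl s (v j)), Finset.sum_sub_distrib]
  simp [Finset.card_univ]

/-- |empirical - true| at one set is dominated by the running max of |yY| -/
lemma abs_D_le_mM {J : Type*} [Fintype J] {B : ℕ → Set E} {p : ℕ → ℝ} {N : ℕ}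
    (hN : 1 ≤ N) {l n : ℕ} (hl : l ≤ n) (h0 : 0 ≤ p l) (h1 : p l ≤ 1/2) (v : J → E) :
    |sS (B l) v / N - p l| ≤ mM B p N n v := by
  have hNpos : (0:ℝ) < N := by exact_mod_cast hN
  have h2 : (0:ℝ) < 1 - p l := by linarith
  have heq : sS (B l) v / N - p l = yY B p N l v * (1 - p l) := by
    rw [yY]
    field_simp
  rw [heq, abs_mul, abs_of_pos h2]
  calc |yY B p N l v| * (1 - p l) ≤ |yY B p N l v| * 1 :=
        mul_le_mul_of_nonneg_left (by linarith) (abs_nonneg _)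
  _ = |yY B p N l v| := mul_one _
  _ ≤ mM B p N n v := abs_yY_le_mM hl v

/-- running max of a family of functions -/
def gmax (H : ℕ → Ω → ℝ) : ℕ → Ω → ℝ
  | 0 => H 0
  | (n+1) => fun ω => max (gmax H n ω) (H (n+1) ω)

lemma gmax_le {H : ℕ → Ω → ℝ} {n : ℕ} {ω : Ω} {c : ℝ}
    (h : ∀ k, k ≤ n → H k ω ≤ c) : gmax H n ω ≤ c := by
  induction n with
  | zero => exact h 0 le_rfl
  | succ n ih =>
    exact max_le (ih (fun k hk => h k (le_trans hk (Nat.le_succ n)))) (h (n+1) le_rfl)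

lemma measurable_gmax {H : ℕ → Ω → ℝ} (hH : ∀ k, Measurable (H k)) (n : ℕ) :
    Measurable (gmax H n) := by
  induction n with
  | zero => exact hH 0
  | succ n ih => exact ih.max (hH (n+1))

lemma gmax_mono {H : ℕ → Ω → ℝ} {n : ℕ} (ω : Ω) : gmax H n ω ≤ gmax H (n+1) ω :=
  le_max_left _ _

lemma le_gmax {H : ℕ → Ω → ℝ} {k n : ℕ} (hk : k ≤ n) (ω : Ω) : H k ω ≤ gmax H n ω := by
  induction n with
  | zero => rw [Nat.le_zero] at hk; subst hk; exact le_refl _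
  | succ n ih =>
    rcases eq_or_lt_of_le hk with h | h
    · subst h; exact le_max_right _ _
    · exact le_trans (ih (Nat.lt_succ_iff.mp h)) (le_max_left _ _)

lemma gmax_nonneg {H : ℕ → Ω → ℝ} (hH : ∀ k ω, 0 ≤ H k ω) (n : ℕ) (ω : Ω) :
    0 ≤ gmax H n ω := le_trans (hH 0 ω) (le_gmax (Nat.zero_le n) ω)

/-- the empirical deviation function -/
def hfun (N : ℕ) (X : Fin N → Ω → E) (ρ : Measure E) (a : E) (t : ℝ) (ω : Ω) : ℝ :=
  |sS (Metric.closedBall a t) (tup X ω) / N - (ρ (Metric.closedBall a t)).toReal|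

lemma measurable_hfun {N : ℕ} {X : Fin N → Ω → E} (hmeas : ∀ i, Measurable (X i))
    (ρ : Measure E) (a : E) (t : ℝ) : Measurable (hfun N X ρ a t) :=
  ((((measurable_sS measurableSet_closedBall).comp
    (measurable_tup hmeas)).div_const _).sub measurable_const).abs

lemma hfun_nonneg {N : ℕ} {X : Fin N → Ω → E} (ρ : Measure E) (a : E) (t : ℝ) (ω : Ω) :
    0 ≤ hfun N X ρ a t ω := abs_nonneg _

lemma hfun_le_two {N : ℕ} (hN : 1 ≤ N) {X : Fin N → Ω → E} (ρ : Measure E)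
    [IsProbabilityMeasure ρ] (a : E) (t : ℝ) (ω : Ω) : hfun N X ρ a t ω ≤ 2 := by
  have hNpos : (0:ℝ) < N := by exact_mod_cast hN
  have h1 : 0 ≤ sS (Metric.closedBall a t) (tup X ω) := sS_nonneg _ _
  have h2 : sS (Metric.closedBall a t) (tup X ω) ≤ N := by
    calc sS (Metric.closedBall a t) (tup X ω) ≤ Fintype.card (Fin N) := sS_le_card _ _
    _ = N := by simp
  have h3 : 0 ≤ (ρ (Metric.closedBall a t)).toReal := ENNReal.toReal_nonneg
  have h4 : (ρ (Metric.closedBall a t)).toReal ≤ 1 := by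
    calc (ρ (Metric.closedBall a t)).toReal ≤ (1 : ENNReal).toReal :=
          ENNReal.toReal_mono ENNReal.one_ne_top prob_le_one
    _ = 1 := ENNReal.toReal_one
  rw [hfun, abs_le]
  constructor
  · have : 0 ≤ sS (Metric.closedBall a t) (tup X ω) / N := by positivity
    linarith
  · have : sS (Metric.closedBall a t) (tup X ω) / N ≤ 1 := by
      rw [div_le_one hNpos]; exact h2
    linarith

lemma gridlem {μ : Measure Ω} [IsProbabilityMeasure μ] {ρ : Measure E}
    [IsProbabilityMeasure ρ] {N : ℕ} (hN : 1 ≤ N) {X : Fin N → Ω → E}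
    (hmeas : ∀ i, Measurable (X i))
    (hindep : iIndepFun X μ)
    (hlaw : ∀ i, Measure.map (X i) μ = ρ) (a : E) (q : ℕ → ℝ) (n : ℕ) :
    ∫ ω, gmax (fun k => hfun N X ρ a (q k)) n ω ∂μ ≤ Real.sqrt (8 / N) := by
  classical
  have hNpos : (0:ℝ) < N := by exact_mod_cast hN
  set F : ℝ → ℝ := fun t => (ρ (Metric.closedBall a t)).toReal with hF
  have hF0 : ∀ t, 0 ≤ F t := fun t => ENNReal.toReal_nonneg
  have hF1 : ∀ t, F t ≤ 1 := by
    intro t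
    calc F t ≤ (1 : ENNReal).toReal := ENNReal.toReal_mono ENNReal.one_ne_top prob_le_one
    _ = 1 := ENNReal.toReal_one
  set T : Finset ℝ := (Finset.range (n+1)).image q with hT
  set Tm : Finset ℝ := T.filter (fun t => F t ≤ 1/2) with hTm
  set Tp : Finset ℝ := T.filter (fun t => ¬ F t ≤ 1/2) with hTp
  -- lower chain
  set r₁ : ℕ → ℝ := fun j => if hj : j < Tm.card then (Tm.orderIsoOfFin rfl ⟨j, hj⟩ : ℝ) else 0
    with hr₁
  set B₁ : ℕ → Set E := fun k => if k = 0 then ∅ else Metric.closedBall a (r₁ (k-1)) with hB₁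
  have hB₁0 : B₁ 0 = ∅ := if_pos rfl
  have hB₁succ : ∀ j, B₁ (j+1) = Metric.closedBall a (r₁ j) := by
    intro j; rw [hB₁]; simp
  have hmeasB₁ : ∀ k, MeasurableSet (B₁ k) := by
    intro k
    rw [hB₁]
    by_cases h : k = 0
    · simp [h]
    · simp only [h, if_false]
      exact measurableSet_closedBall
  have hr₁mem : ∀ j (hj : j < Tm.card), r₁ j ∈ Tm := by
    intro j hj
    rw [hr₁]
    simp only [hj, dif_pos]
    exact (Tm.orderIsoOfFin rfl ⟨j, hj⟩).2
  have hr₁mono : ∀ j j', j ≤ j' → j' < Tm.card → r₁ j ≤ r₁ j' := by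
    intro j j' hjj hj'
    have hj : j < Tm.card := lt_of_le_of_lt hjj hj'
    rw [hr₁]
    simp only [hj, hj', dif_pos]
    exact Subtype.coe_le_coe.mpr ((Tm.orderIsoOfFin rfl).le_iff_le.mpr hjj)
  have hmono₁ : ∀ k, k < Tm.card → B₁ k ⊆ B₁ (k+1) := by
    intro k hk
    by_cases h : k = 0
    · subst h; rw [hB₁0]; exact Set.empty_subset _
    · obtain ⟨j, rfl⟩ := Nat.exists_eq_succ_of_ne_zero h
      rw [hB₁succ, hB₁succ]
      exact Metric.closedBall_subset_closedBall (hr₁mono j (j+1) (Nat.le_succ j) hk)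
  have hp₁ : ∀ k, k ≤ Tm.card → pB ρ B₁ k ≤ 1/2 := by
    intro k hk
    by_cases h : k = 0
    · subst h; rw [pB, hB₁0]; simp
    · obtain ⟨j, rfl⟩ := Nat.exists_eq_succ_of_ne_zero h
      have hj : j < Tm.card := hk
      have := hr₁mem j hj
      rw [hTm, Finset.mem_filter] at this
      rw [pB, hB₁succ]
      exact this.2
  have E1 := core hN hmeas hindep hlaw hmeasB₁ hB₁0 hmono₁ hp₁
  -- upper chain
  set r₂ : ℕ → ℝ := fun j => if hj : j < Tp.card then
      (Tp.orderIsoOfFin rfl ⟨Tp.card - 1 - j, by omega⟩ : ℝ) else 0 with hr₂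
  set B₂ : ℕ → Set E := fun k => if k = 0 then ∅ else (Metric.closedBall a (r₂ (k-1)))ᶜ
    with hB₂
  have hB₂0 : B₂ 0 = ∅ := if_pos rfl
  have hB₂succ : ∀ j, B₂ (j+1) = (Metric.closedBall a (r₂ j))ᶜ := by
    intro j; rw [hB₂]; simp
  have hmeasB₂ : ∀ k, MeasurableSet (B₂ k) := by
    intro k
    rw [hB₂]
    by_cases h : k = 0
    · simp [h]
    · simp only [h, if_false]
      exact measurableSet_closedBall.compl
  have hr₂mem : ∀ j (hj : j < Tp.card), r₂ j ∈ Tp := by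
    intro j hj
    rw [hr₂]
    simp only [hj, dif_pos]
    exact (Tp.orderIsoOfFin rfl _).2
  have hr₂anti : ∀ j j', j ≤ j' → j' < Tp.card → r₂ j' ≤ r₂ j := by
    intro j j' hjj hj'
    have hj : j < Tp.card := lt_of_le_of_lt hjj hj'
    rw [hr₂]
    simp only [hj, hj', dif_pos]
    refine Subtype.coe_le_coe.mpr ((Tp.orderIsoOfFin rfl).le_iff_le.mpr ?_)
    simp only [Fin.mk_le_mk]
    omega
  have hmono₂ : ∀ k, k < Tp.card → B₂ k ⊆ B₂ (k+1) := by
    intro k hk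
    by_cases h : k = 0
    · subst h; rw [hB₂0]; exact Set.empty_subset _
    · obtain ⟨j, rfl⟩ := Nat.exists_eq_succ_of_ne_zero h
      rw [hB₂succ, hB₂succ]
      exact Set.compl_subset_compl.mpr
        (Metric.closedBall_subset_closedBall (hr₂anti j (j+1) (Nat.le_succ j) hk))
  have hcomplReal : ∀ t : ℝ, (ρ (Metric.closedBall a t)ᶜ).toReal = 1 - F t := by
    intro t
    rw [prob_compl_eq_one_sub measurableSet_closedBall,
      ENNReal.toReal_sub_of_le prob_le_one ENNReal.one_ne_top, ENNReal.toReal_one, hF]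
  have hp₂ : ∀ k, k ≤ Tp.card → pB ρ B₂ k ≤ 1/2 := by
    intro k hk
    by_cases h : k = 0
    · subst h; rw [pB, hB₂0]; simp
    · obtain ⟨j, rfl⟩ := Nat.exists_eq_succ_of_ne_zero h
      have hj : j < Tp.card := hk
      have hmem := hr₂mem j hj
      rw [hTp, Finset.mem_filter] at hmem
      rw [pB, hB₂succ, hcomplReal]
      have := hmem.2
      push_neg at this
      linarith
  have E2 := core hN hmeas hindep hlaw hmeasB₂ hB₂0 hmono₂ hp₂
  -- pointwise domination
  set M₁ : Ω → ℝ := fun ω => mM B₁ (pB ρ B₁) N Tm.card (tup X ω) with hM₁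
  set M₂ : Ω → ℝ := fun ω => mM B₂ (pB ρ B₂) N Tp.card (tup X ω) with hM₂
  have measM₁ : Measurable M₁ := (measurable_mM _ _ hmeasB₁ _).comp (measurable_tup hmeas)
  have measM₂ : Measurable M₂ := (measurable_mM _ _ hmeasB₂ _).comp (measurable_tup hmeas)
  have hM₁nn : ∀ ω, 0 ≤ M₁ ω := fun ω => mM_nonneg _ _ _ _ _
  have hM₂nn : ∀ ω, 0 ≤ M₂ ω := fun ω => mM_nonneg _ _ _ _ _
  have hcard : Fintype.card (Fin N) ≤ N := by simp
  have hM₁le : ∀ ω, M₁ ω ≤ 4 :=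
    fun ω => mM_le hN hcard (fun k _ => pB_nonneg ρ B₁ k) (fun k hk => hp₁ k hk) _
  have hM₂le : ∀ ω, M₂ ω ≤ 4 :=
    fun ω => mM_le hN hcard (fun k _ => pB_nonneg ρ B₂ k) (fun k hk => hp₂ k hk) _
  set W : Ω → ℝ := fun ω => Real.sqrt ((M₁ ω)^2 + (M₂ ω)^2) with hW
  have hdom : ∀ ω, gmax (fun k => hfun N X ρ a (q k)) n ω ≤ W ω := by
    intro ω
    refine gmax_le (fun k hk => ?_)
    have htT : q k ∈ T := by
      rw [hT]
      exact Finset.mem_image_of_mem q (Finset.mem_range.mpr (Nat.lt_succ_of_le hk))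
    set t := q k with ht
    by_cases hcase : F t ≤ 1/2
    · -- lower half
      have htm : t ∈ Tm := by rw [hTm, Finset.mem_filter]; exact ⟨htT, hcase⟩
      set j : Fin Tm.card := (Tm.orderIsoOfFin rfl).symm ⟨t, htm⟩ with hj
      have hrt : r₁ (j : ℕ) = t := by
        rw [hr₁]
        simp only [j.2, dif_pos]
        have : (Tm.orderIsoOfFin rfl) ⟨(j : ℕ), j.2⟩ = ⟨t, htm⟩ := by
          rw [show (⟨(j : ℕ), j.2⟩ : Fin Tm.card) = j from rfl, hj]
          exact (Tm.orderIsoOfFin rfl).apply_symm_apply _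
        rw [this]
      have hBt : B₁ ((j : ℕ) + 1) = Metric.closedBall a t := by rw [hB₁succ, hrt]
      have hpj : pB ρ B₁ ((j : ℕ) + 1) = F t := by rw [pB, hBt]
      have heq : hfun N X ρ a t ω
          = |sS (B₁ ((j : ℕ)+1)) (tup X ω) / N - pB ρ B₁ ((j : ℕ)+1)| := by
        rw [hfun, hBt, hpj]
      rw [heq]
      have h1 : |sS (B₁ ((j : ℕ)+1)) (tup X ω) / N - pB ρ B₁ ((j : ℕ)+1)| ≤ M₁ ω :=
        abs_D_le_mM hN j.2 (pB_nonneg ρ B₁ _) (hp₁ _ j.2) _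
      refine le_trans h1 ?_
      rw [hW]
      refine Real.le_sqrt_of_sq_le ?_
      nlinarith [hM₂nn ω, sq_nonneg (M₂ ω)]
    · -- upper half
      have htp : t ∈ Tp := by rw [hTp, Finset.mem_filter]; exact ⟨htT, hcase⟩
      set j : Fin Tp.card := (Tp.orderIsoOfFin rfl).symm ⟨t, htp⟩ with hj
      set l : ℕ := Tp.card - 1 - (j : ℕ) with hl
      have hlcard : l < Tp.card := by have := j.2; omega
      have hrt : r₂ l = t := by
        rw [hr₂]
        simp only [hlcard, dif_pos]
        have hidx : Tp.card - 1 - l = (j : ℕ) := by have := j.2; omega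
        have : (⟨Tp.card - 1 - l, by omega⟩ : Fin Tp.card) = j := by
          apply Fin.ext
          simp [hidx]
        rw [this, hj]
        have := (Tp.orderIsoOfFin rfl).apply_symm_apply (⟨t, htp⟩ : Tp)
        rw [this]
      have hBt : B₂ (l + 1) = (Metric.closedBall a t)ᶜ := by rw [hB₂succ, hrt]
      have hflip : hfun N X ρ a t ω
          = |sS (B₂ (l+1)) (tup X ω) / N - pB ρ B₂ (l+1)| := by
        rw [hfun, pB, hBt, hcomplReal, sS_compl]
        rw [show (↑N - sS (Metric.closedBall a t) (tup X ω)) / ↑N - (1 - F t)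
            = -(sS (Metric.closedBall a t) (tup X ω) / ↑N - F t) by field_simp; ring]
        rw [abs_neg, hF]
      rw [hflip]
      have h1 : |sS (B₂ (l+1)) (tup X ω) / N - pB ρ B₂ (l+1)| ≤ M₂ ω :=
        abs_D_le_mM hN hlcard (pB_nonneg ρ B₂ _) (hp₂ _ hlcard) _
      refine le_trans h1 ?_
      rw [hW]
      refine Real.le_sqrt_of_sq_le ?_
      nlinarith [hM₁nn ω, sq_nonneg (M₁ ω)]
  -- integration and Cauchy-Schwarz
  have measW : Measurable W :=
    ((measM₁.pow_const 2).add (measM₂.pow_const 2)).sqrt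
  have hWnn : ∀ ω, 0 ≤ W ω := fun ω => Real.sqrt_nonneg _
  have hWle : ∀ ω, |W ω| ≤ 6 := by
    intro ω
    rw [abs_of_nonneg (hWnn ω), hW]
    calc Real.sqrt ((M₁ ω)^2 + (M₂ ω)^2) ≤ Real.sqrt 36 := by
          refine Real.sqrt_le_sqrt ?_
          nlinarith [hM₁le ω, hM₂le ω, hM₁nn ω, hM₂nn ω]
    _ = 6 := by
          rw [show (36:ℝ) = 6^2 by norm_num, Real.sqrt_sq (by norm_num : (0:ℝ) ≤ 6)]
  have intW : Integrable W μ := intb measW hWle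
  have intg : Integrable (gmax (fun k => hfun N X ρ a (q k)) n) μ := by
    refine intb (measurable_gmax (fun k => measurable_hfun hmeas ρ a (q k)) n)
      (C := 2) (fun ω => ?_)
    rw [abs_of_nonneg (gmax_nonneg (fun k ω' => hfun_nonneg ρ a (q k) ω') n ω)]
    exact gmax_le (fun k _ => hfun_le_two hN ρ a (q k) ω)
  have step1 : ∫ ω, gmax (fun k => hfun N X ρ a (q k)) n ω ∂μ ≤ ∫ ω, W ω ∂μ :=
    integral_mono intg intW hdom
  set c := ∫ ω, W ω ∂μ with hc
  have hc0 : 0 ≤ c := integral_nonneg (fun ω => hWnn ω)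
  have intW2 : Integrable (fun ω => W ω^2) μ := by
    refine intb (measW.pow_const 2) (C := 36) (fun ω => ?_)
    rw [abs_pow]
    nlinarith [hWle ω, abs_nonneg (W ω)]
  have intM₁2 : Integrable (fun ω => M₁ ω^2) μ := by
    refine intb (measM₁.pow_const 2) (C := 16) (fun ω => ?_)
    rw [abs_pow, abs_of_nonneg (hM₁nn ω)]
    nlinarith [hM₁le ω, hM₁nn ω]
  have intM₂2 : Integrable (fun ω => M₂ ω^2) μ := by
    refine intb (measM₂.pow_const 2) (C := 16) (fun ω => ?_)
    rw [abs_pow, abs_of_nonneg (hM₂nn ω)]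
    nlinarith [hM₂le ω, hM₂nn ω]
  have hvar : 0 ≤ ∫ ω, (W ω - c)^2 ∂μ := integral_nonneg (fun ω => sq_nonneg _)
  have hexp : ∫ ω, (W ω - c)^2 ∂μ = (∫ ω, W ω^2 ∂μ) - c^2 := by
    have hpt : (fun ω => (W ω - c)^2) = fun ω => (W ω^2 - 2*c*W ω) + c^2 :=
      funext (fun ω => by ring)
    have intAux : Integrable (fun ω => W ω^2 - 2*c*W ω) μ :=
      (intW2.sub (intW.const_mul (2*c))).congr (Filter.Eventually.of_forall (fun ω => rfl))
    rw [hpt, integral_add intAux (integrable_const _),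
      integral_sub intW2 (intW.const_mul (2*c)), integral_const_mul, integral_const]
    simp only [measure_univ, probReal_univ, ENNReal.toReal_one, smul_eq_mul, one_mul]
    rw [← hc]
    ring
  have hW2 : ∫ ω, W ω^2 ∂μ = (∫ ω, M₁ ω^2 ∂μ) + ∫ ω, M₂ ω^2 ∂μ := by
    have hpt : (fun ω => W ω^2) = fun ω => M₁ ω^2 + M₂ ω^2 :=
      funext (fun ω => by rw [hW]; exact Real.sq_sqrt (by positivity))
    rw [hpt, integral_add intM₁2 intM₂2]
  have hE1' : ∫ ω, M₁ ω^2 ∂μ ≤ 4/N := E1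
  have hE2' : ∫ ω, M₂ ω^2 ∂μ ≤ 4/N := E2
  have hcsq : c^2 ≤ 8/N := by
    have h1 : c^2 ≤ ∫ ω, W ω^2 ∂μ := by linarith [hvar, hexp]
    rw [hW2] at h1
    have : (4:ℝ)/N + 4/N = 8/N := by ring
    linarith
  have hcle : c ≤ Real.sqrt (8/N) :=
    (Real.le_sqrt hc0 (by positivity)).mpr hcsq
  linarith

end Grid
open Filter Topology in
set_option maxHeartbeats 1000000 in
theorem stmt_10 {Ω : Type*} [MeasurableSpace Ω] (μ : Measure Ω) [IsProbabilityMeasure μ]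
    (d N : ℕ) (hN : 1 ≤ N)
    (ρ : Measure (EuclideanSpace ℝ (Fin d))) [IsProbabilityMeasure ρ]
    (X : Fin N → Ω → EuclideanSpace ℝ (Fin d))
    (hmeas : ∀ i, Measurable (X i))
    (hindep : iIndepFun X μ)
    (hlaw : ∀ i, Measure.map (X i) μ = ρ)
    (a : EuclideanSpace ℝ (Fin d)) :
    (∫ ω, ⨆ u : ℝ,
        |(∑ i : Fin N, if dist a (X i ω) ≤ u then (1 : ℝ) else 0) / N
          - (ρ (Metric.closedBall a u)).toReal| ∂μ)
      ≤ 3 / Real.sqrt N := by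
  classical
  have hNpos : (0:ℝ) < N := by exact_mod_cast hN
  set qq : ℕ → ℝ := fun m => ((Denumerable.ofNat ℚ m : ℚ) : ℝ) with hqq
  set H : ℕ → Ω → ℝ := fun k => hfun N X ρ a (qq k) with hH
  set f : Ω → ℝ := fun ω => ⨆ u : ℝ,
      |(∑ i : Fin N, if dist a (X i ω) ≤ u then (1 : ℝ) else 0) / N
        - (ρ (Metric.closedBall a u)).toReal| with hf
  have hsum : ∀ (u : ℝ) ω, (∑ i : Fin N, if dist a (X i ω) ≤ u then (1:ℝ) else 0)
      = sS (Metric.closedBall a u) (tup X ω) := by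
    intro u ω
    rw [sS]
    refine Finset.sum_congr rfl (fun i _ => ?_)
    by_cases h : dist a (X i ω) ≤ u
    · rw [if_pos h, chiR_of_mem (by rw [Metric.mem_closedBall, dist_comm]; exact h)]
    · rw [if_neg h, chiR_of_not_mem (by rw [Metric.mem_closedBall, dist_comm]; exact h)]
  have hfeq : ∀ ω, f ω = ⨆ u : ℝ, hfun N X ρ a u ω := by
    intro ω
    simp only [hf, hfun]
    exact iSup_congr (fun u => by rw [hsum u ω])
  set F : ℝ → ℝ := fun t => (ρ (Metric.closedBall a t)).toReal with hF
  have hFmono : Monotone F := fun s t hst =>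
    ENNReal.toReal_mono (measure_ne_top ρ _)
      (measure_mono (Metric.closedBall_subset_closedBall hst))
  have hbdd : ∀ ω, BddAbove (Set.range (fun u => hfun N X ρ a u ω)) := by
    intro ω
    refine ⟨2, ?_⟩
    rintro x ⟨u, rfl⟩
    exact hfun_le_two hN ρ a u ω
  have hgbdd : ∀ ω, BddAbove (Set.range (fun m => gmax H m ω)) := by
    intro ω
    refine ⟨2, ?_⟩
    rintro x ⟨m, rfl⟩
    exact gmax_le (fun k _ => hfun_le_two hN ρ a (qq k) ω)
  have hmono_g : ∀ ω, Monotone (fun m => gmax H m ω) :=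
    fun ω => monotone_nat_of_le_succ (fun m => gmax_mono ω)
  have hkey : ∀ ω, f ω = ⨆ m : ℕ, gmax H m ω := by
    intro ω
    rw [hfeq ω]
    apply le_antisymm
    · refine ciSup_le (fun u => ?_)
      refine le_of_forall_pos_le_add (fun ε hε => ?_)
      obtain ⟨δ, hδpos, hδ⟩ : ∃ δ > 0, F (u + δ) < F u + ε := by
        have hanti : Antitone (fun m : ℕ => Metric.closedBall a (u + 1/(m+1))) := by
          intro m m' hmm'
          apply Metric.closedBall_subset_closedBall
          have h1 : (0:ℝ) < m + 1 := by positivity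
          have h2 : (m:ℝ) + 1 ≤ m' + 1 := by exact_mod_cast Nat.succ_le_succ hmm'
          have := one_div_le_one_div_of_le h1 h2
          linarith
        have hiInter : (⋂ m : ℕ, Metric.closedBall a (u + 1/(m+1)))
            = Metric.closedBall a u := by
          ext x
          simp only [Set.mem_iInter, Metric.mem_closedBall]
          constructor
          · intro h
            by_contra hc
            push_neg at hc
            have hmpos : (0:ℝ) < dist x a - u := by linarith
            obtain ⟨m, hm⟩ := exists_nat_gt (1/(dist x a - u))
            have h1 : (1:ℝ)/(m+1) < dist x a - u := by
              rw [div_lt_iff₀ (by positivity)]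
              have h2 : 1/(dist x a - u) < (m:ℝ) + 1 := by linarith
              calc (1:ℝ) = (dist x a - u) * (1/(dist x a - u)) := by field_simp
              _ < (dist x a - u) * ((m:ℝ)+1) := by
                  exact mul_lt_mul_of_pos_left h2 hmpos
            linarith [h m]
          · intro h m
            have : (0:ℝ) < 1/((m:ℝ)+1) := by positivity
            linarith
        have htend := tendsto_measure_iInter_atTop (μ := ρ)
          (fun m : ℕ => measurableSet_closedBall.nullMeasurableSet)
          hanti ⟨0, measure_ne_top ρ _⟩
        rw [hiInter] at htend
        have htoReal : Tendsto (fun m : ℕ => F (u + 1/(m+1))) atTop (𝓝 (F u)) := by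
          have := (ENNReal.tendsto_toReal (measure_ne_top ρ (Metric.closedBall a u))).comp htend
          exact this
        have hev := htoReal.eventually_lt_const (by linarith : F u < F u + ε)
        obtain ⟨m, hm⟩ := hev.exists
        exact ⟨1/(m+1), by positivity, hm⟩
      set A : Finset (Fin N) := Finset.univ.filter (fun i => u < dist a (X i ω)) with hA
      set δ₂ : ℝ := if hA' : A.Nonempty then (A.inf' hA' (fun i => dist a (X i ω))) - u else 1
        with hδ₂
      have hδ₂pos : 0 < δ₂ := by
        rw [hδ₂]
        split
        · next hA' =>
            obtain ⟨i0, hi0, he⟩ := A.exists_mem_eq_inf' hA' (fun i => dist a (X i ω))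
            rw [he]
            rw [hA, Finset.mem_filter] at hi0
            linarith [hi0.2]
        · norm_num
      obtain ⟨v, hv1, hv2⟩ := exists_rat_btwn
        (show u < min (u + δ) (u + δ₂) by rw [lt_min_iff]; constructor <;> linarith)
      have hvδ : (v:ℝ) < u + δ := lt_of_lt_of_le hv2 (min_le_left _ _)
      have hvδ₂ : (v:ℝ) < u + δ₂ := lt_of_lt_of_le hv2 (min_le_right _ _)
      have hiff : ∀ i : Fin N,
          (X i ω ∈ Metric.closedBall a (v:ℝ)) ↔ (X i ω ∈ Metric.closedBall a u) := by
        intro i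
        rw [Metric.mem_closedBall, Metric.mem_closedBall, dist_comm]
        constructor
        · intro h
          by_contra hc
          push_neg at hc
          have hiA : i ∈ A := by
            rw [hA, Finset.mem_filter]
            exact ⟨Finset.mem_univ i, hc⟩
          have hinf : δ₂ ≤ dist a (X i ω) - u := by
            rw [hδ₂, dif_pos ⟨i, hiA⟩]
            have := Finset.inf'_le (fun j => dist a (X j ω)) hiA
            linarith
          linarith
        · intro h
          linarith [le_of_lt hv1]
      have hsSeq : sS (Metric.closedBall a (v:ℝ)) (tup X ω)
          = sS (Metric.closedBall a u) (tup X ω) := by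
        rw [sS, sS]
        refine Finset.sum_congr rfl (fun i _ => ?_)
        by_cases h : X i ω ∈ Metric.closedBall a u
        · rw [show tup X ω i = X i ω from rfl, chiR_of_mem h, chiR_of_mem ((hiff i).mpr h)]
        · rw [show tup X ω i = X i ω from rfl, chiR_of_not_mem h,
            chiR_of_not_mem (fun hc => h ((hiff i).mp hc))]
      have hFv1 : F u ≤ F (v:ℝ) := hFmono (le_of_lt hv1)
      have hFv2 : F (v:ℝ) ≤ F u + ε := le_trans (hFmono (le_of_lt hvδ)) (le_of_lt hδ)
      have hcomp : hfun N X ρ a u ω ≤ hfun N X ρ a (v:ℝ) ω + ε := by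
        rw [hfun, hfun, hsSeq]
        have htri : |sS (Metric.closedBall a u) (tup X ω) / N - F u|
            ≤ |sS (Metric.closedBall a u) (tup X ω) / N - F (v:ℝ)| + |F (v:ℝ) - F u| :=
          abs_sub_le _ _ _
        have h2 : |F (v:ℝ) - F u| ≤ ε := by
          rw [abs_of_nonneg (by linarith)]
          linarith
        have hFdef : ∀ t : ℝ, (ρ (Metric.closedBall a t)).toReal = F t := fun t => rfl
        rw [hFdef, hFdef]
        linarith
      obtain ⟨k, hk⟩ : ∃ k, qq k = (v:ℝ) :=
        ⟨@Encodable.encode ℚ Denumerable.toEncodable v,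
          by simp only [hqq]; exact_mod_cast Denumerable.ofNat_encode v⟩
      have hle2 : hfun N X ρ a (v:ℝ) ω ≤ ⨆ m, gmax H m ω := by
        rw [← hk]
        calc hfun N X ρ a (qq k) ω = H k ω := by rw [hH]
        _ ≤ gmax H k ω := le_gmax le_rfl ω
        _ ≤ ⨆ m, gmax H m ω := le_ciSup (hgbdd ω) k
      linarith
    · refine ciSup_le (fun m => ?_)
      refine gmax_le (fun k _ => ?_)
      rw [hH]
      exact le_ciSup (hbdd ω) (qq k)
  show ∫ ω, f ω ∂μ ≤ 3 / Real.sqrt N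
  by_cases hint : Integrable f μ
  case neg => rw [integral_undef hint]; positivity
  case pos =>
    have hgnn : ∀ m ω, 0 ≤ gmax H m ω :=
      fun m ω => gmax_nonneg (fun k ω' => hfun_nonneg ρ a (qq k) ω') m ω
    have hfnn : ∀ ω, 0 ≤ f ω := by
      intro ω
      rw [hkey ω]
      exact le_trans (hgnn 0 ω) (le_ciSup (hgbdd ω) 0)
    have hgmeas : ∀ m, Measurable (gmax H m) :=
      fun m => measurable_gmax (fun k => measurable_hfun hmeas ρ a (qq k)) m
    have hofReal : ∀ ω, ENNReal.ofReal (f ω) = ⨆ m, ENNReal.ofReal (gmax H m ω) := by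
      intro ω
      have ht1 : Tendsto (fun m => gmax H m ω) atTop (𝓝 (f ω)) := by
        rw [hkey ω]
        exact tendsto_atTop_ciSup (hmono_g ω) (hgbdd ω)
      have ht2 := (ENNReal.continuous_ofReal.tendsto _).comp ht1
      have ht3 := tendsto_atTop_iSup
        (f := fun m => ENNReal.ofReal (gmax H m ω))
        (fun m m' h => ENNReal.ofReal_le_ofReal ((hmono_g ω) h))
      exact tendsto_nhds_unique ht2 ht3
    have hlin : ∫⁻ ω, ENNReal.ofReal (f ω) ∂μ
        = ⨆ m, ∫⁻ ω, ENNReal.ofReal (gmax H m ω) ∂μ := by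
      rw [show (fun ω => ENNReal.ofReal (f ω))
        = fun ω => ⨆ m, ENNReal.ofReal (gmax H m ω) from funext hofReal]
      exact lintegral_iSup (fun m => (hgmeas m).ennreal_ofReal)
        (fun m m' h ω => ENNReal.ofReal_le_ofReal ((hmono_g ω) h))
    have hintg : ∀ m, Integrable (gmax H m) μ := by
      intro m
      refine intb (hgmeas m) (C := 2) (fun ω => ?_)
      rw [abs_of_nonneg (hgnn m ω)]
      exact gmax_le (fun k _ => hfun_le_two hN ρ a (qq k) ω)
    have hbound : ∀ m, ∫⁻ ω, ENNReal.ofReal (gmax H m ω) ∂μ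
        ≤ ENNReal.ofReal (Real.sqrt (8/N)) := by
      intro m
      rw [← ofReal_integral_eq_lintegral_ofReal (hintg m)
        (Filter.Eventually.of_forall (fun ω => hgnn m ω))]
      exact ENNReal.ofReal_le_ofReal (gridlem hN hmeas hindep hlaw a qq m)
    have hlin_le : ∫⁻ ω, ENNReal.ofReal (f ω) ∂μ ≤ ENNReal.ofReal (Real.sqrt (8/N)) := by
      rw [hlin]
      exact iSup_le hbound
    have hA2 : ∫ ω, f ω ∂μ = (∫⁻ ω, ENNReal.ofReal (f ω) ∂μ).toReal :=
      integral_eq_lintegral_of_nonneg_ae (Filter.Eventually.of_forall hfnn)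
        hint.aestronglyMeasurable
    rw [hA2]
    refine le_trans (ENNReal.toReal_le_of_le_ofReal (Real.sqrt_nonneg _) hlin_le) ?_
    rw [Real.sqrt_div' 8 (le_of_lt hNpos)]
    have h8 : Real.sqrt 8 ≤ 3 := by
      rw [show (3:ℝ) = Real.sqrt 9 by
        rw [show (9:ℝ) = 3^2 by norm_num, Real.sqrt_sq (by norm_num : (0:ℝ) ≤ 3)]]
      exact Real.sqrt_le_sqrt (by norm_num)
    have hsN : 0 < Real.sqrt N := Real.sqrt_pos.mpr hNpos
    exact (div_le_div_iff_of_pos_right hsN).mpr h8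
end

section
/- Let ε, α > 0, R > 0, and let Y₁,…,Y_N be i.i.d. real random variables with common law ρ having bounded Lebesgue density (also denoted ρ). Let ρ^N = (1/N)∑ δ_{Y_i}. Then with δ = εα/(2‖ρ‖_∞), P( sup_{x ∈ [-R,R]} ρ^N(B(x,ε))/(2ε) ≥ ‖ρ‖_∞ + α ) ≤ (2R‖ρ‖_∞/(εα) + 2) e^{-2N(εα)²}. -/
open MeasureTheory ProbabilityTheory Finset

lemma bernoulli_mgf_le {p t : ℝ} (hp0 : 0 ≤ p) (hp1 : p ≤ 1) (ht : 0 ≤ t) :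
    1 - p + p * Real.exp t ≤ Real.exp (p * t + t ^ 2 / 8) := by
  set h : ℝ → ℝ := fun u => 1 - p + p * Real.exp u with hh
  have hpos : ∀ u, 0 < h u := by
    intro u
    rcases eq_or_lt_of_le hp0 with h0 | h0
    · simp [hh, ← h0]
    · have := mul_pos h0 (Real.exp_pos u)
      simp only [hh]; linarith
  have hderh : ∀ u, HasDerivAt h (p * Real.exp u) u := by
    intro u
    rw [hh]; exact ((Real.hasDerivAt_exp u).const_mul p).const_add (1 - p)
  set q : ℝ → ℝ := fun u => p * Real.exp u / h u with hq
  set g1 : ℝ → ℝ := fun u => p + u / 4 - q u with hg1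
  set g : ℝ → ℝ := fun u => p * u + u ^ 2 / 8 - Real.log (h u) with hg
  have hderg : ∀ u, HasDerivAt g (g1 u) u := by
    intro u
    have h1 : HasDerivAt (fun u : ℝ => p * u) p u := by
      simpa using (hasDerivAt_id u).const_mul p
    have h2 : HasDerivAt (fun u : ℝ => u ^ 2 / 8) (u / 4) u := by
      have := (hasDerivAt_pow 2 u).div_const 8
      exact this.congr_deriv (by rw [Nat.cast_ofNat, show (2:ℕ) - 1 = 1 from rfl, pow_one]; ring)
    have h3 : HasDerivAt (fun u => Real.log (h u)) (q u) u :=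
      (hderh u).log (hpos u).ne'
    exact (h1.add h2).sub h3
  have hderg1 : ∀ u, HasDerivAt g1
      (1 / 4 - (p * Real.exp u * h u - p * Real.exp u * (p * Real.exp u)) / h u ^ 2) u := by
    intro u
    have hq' : HasDerivAt q
        ((p * Real.exp u * h u - p * Real.exp u * (p * Real.exp u)) / h u ^ 2) u :=
      ((Real.hasDerivAt_exp u).const_mul p).div (hderh u) (hpos u).ne'
    have h4 : HasDerivAt (fun u : ℝ => p + u / 4) (1 / 4) u := by
      simpa using ((hasDerivAt_id u).div_const 4).const_add p
    exact h4.sub hq'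
  have hg1nonneg : ∀ u, 0 ≤ 1 / 4 -
      (p * Real.exp u * h u - p * Real.exp u * (p * Real.exp u)) / h u ^ 2 := by
    intro u
    rw [sub_nonneg, div_le_iff₀ (pow_pos (hpos u) 2)]
    have he := Real.exp_pos u
    have hb : h u = 1 - p + p * Real.exp u := rfl
    nlinarith [sq_nonneg ((1 - p) - p * Real.exp u), mul_nonneg hp0 he.le]
  have hg1mono : Monotone g1 :=
    monotone_of_deriv_nonneg (fun u => (hderg1 u).differentiableAt)
      (fun u => by rw [(hderg1 u).deriv]; exact hg1nonneg u)
  have hg10 : g1 0 = 0 := by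
    simp [hg1, hq, hh]
  have hgmono : MonotoneOn g (Set.Ici 0) := by
    refine monotoneOn_of_deriv_nonneg (convex_Ici 0)
      (Differentiable.continuous (fun u => (hderg u).differentiableAt)).continuousOn
      (fun u _ => (hderg u).differentiableAt.differentiableWithinAt)
      (fun u hu => ?_)
    rw [(hderg u).deriv]
    have := hg1mono (le_of_lt (by simpa [interior_Ici] using hu : (0:ℝ) < u))
    rw [hg10] at this
    exact this
  have hg0 : g 0 = 0 := by simp [hg, hh]
  have hgt : 0 ≤ g t := by
    have := hgmono (Set.self_mem_Ici) (Set.mem_Ici.mpr ht) ht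
    rwa [hg0] at this
  have hlog : Real.log (h t) ≤ p * t + t ^ 2 / 8 := by
    simp only [hg] at hgt; linarith
  calc 1 - p + p * Real.exp t = h t := rfl
    _ ≤ Real.exp (p * t + t ^ 2 / 8) := by
        rw [← Real.exp_log (hpos t)]
        exact Real.exp_le_exp.mpr hlog

lemma chernoff_sum_indicator {Ω : Type*} [MeasurableSpace Ω] (μ : Measure Ω)
    [IsProbabilityMeasure μ] (N : ℕ) (X : Fin N → Ω → ℝ)
    (hXmeas : ∀ i, Measurable (X i))
    (hindep : iIndepFun X μ)
    (hX01 : ∀ i ω, X i ω = 0 ∨ X i ω = 1)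
    (p β : ℝ) (hβ : 0 < β) (hp : ∀ i, μ[X i] ≤ p) :
    μ {ω | ↑N * p + ↑N * β ≤ ∑ i, X i ω} ≤ ENNReal.ofReal (Real.exp (-2 * ↑N * β ^ 2)) := by
  have hX0 : ∀ i ω, 0 ≤ X i ω := fun i ω => by rcases hX01 i ω with h | h <;> simp [h]
  have hX1 : ∀ i ω, X i ω ≤ 1 := fun i ω => by rcases hX01 i ω with h | h <;> simp [h]
  have hXint : ∀ i, Integrable (X i) μ := by
    intro i
    refine (integrable_const (1:ℝ)).mono' (hXmeas i).aestronglyMeasurable ?_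
    filter_upwards with ω
    rw [Real.norm_eq_abs, abs_of_nonneg (hX0 i ω)]
    exact hX1 i ω
  set t : ℝ := 4 * β with htdef
  have ht : 0 ≤ t := by positivity
  have hexpX : ∀ i, (fun ω => Real.exp (t * X i ω))
      = fun ω => 1 + (Real.exp t - 1) * X i ω := by
    intro i; funext ω
    rcases hX01 i ω with h | h <;> simp [h]
  have hmgf : ∀ i, mgf (X i) μ t = 1 - μ[X i] + μ[X i] * Real.exp t := by
    intro i
    rw [mgf, hexpX i]
    rw [integral_add (integrable_const 1) ((hXint i).const_mul _)]
    rw [MeasureTheory.integral_const_mul]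
    simp
    ring
  have hpi0 : ∀ i, 0 ≤ μ[X i] := fun i => integral_nonneg (fun ω => hX0 i ω)
  have hpi1 : ∀ i, μ[X i] ≤ 1 := by
    intro i
    have h1 : μ[X i] ≤ μ[fun _ : Ω => (1:ℝ)] :=
      integral_mono (hXint i) (integrable_const 1) (fun ω => hX1 i ω)
    simpa using h1
  have hmgfle : ∀ i, mgf (X i) μ t ≤ Real.exp (p * t + t ^ 2 / 8) := by
    intro i
    rw [hmgf i]
    refine (bernoulli_mgf_le (hpi0 i) (hpi1 i) ht).trans ?_
    apply Real.exp_le_exp.mpr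
    have : μ[X i] * t ≤ p * t := mul_le_mul_of_nonneg_right (hp i) ht
    linarith
  -- bound on the sum
  have hSle : ∀ ω, (∑ i, X i ω) ≤ (N : ℝ) := by
    intro ω
    calc (∑ i, X i ω) ≤ ∑ _i : Fin N, (1:ℝ) := Finset.sum_le_sum (fun i _ => hX1 i ω)
      _ = N := by simp
  have hSmeas : Measurable (∑ i, X i) := by
    have : (∑ i, X i) = fun ω => ∑ i, X i ω := by funext ω; simp
    rw [this]
    exact Finset.measurable_sum Finset.univ (fun i _ => hXmeas i)
  have hSnonneg : ∀ ω, 0 ≤ (∑ i, X i) ω := by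
    intro ω
    simp only [Finset.sum_apply]
    exact Finset.sum_nonneg (fun i _ => hX0 i ω)
  have hint : Integrable (fun ω => Real.exp (t * (∑ i, X i) ω)) μ := by
    refine (integrable_const (Real.exp (t * N))).mono'
      ((hSmeas.const_mul t).exp).aestronglyMeasurable ?_
    filter_upwards with ω
    rw [Real.norm_eq_abs, abs_of_nonneg (Real.exp_pos _).le, Real.exp_le_exp]
    have := hSle ω
    simp only [Finset.sum_apply] at this ⊢
    exact mul_le_mul_of_nonneg_left this ht
  have hcher := measure_ge_le_exp_mul_mgf (X := ∑ i, X i) (μ := μ)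
    (↑N * p + ↑N * β) ht hint
  have hmgfsum : mgf (∑ i, X i) μ t = ∏ i, mgf (X i) μ t := by
    have := hindep.mgf_sum (t := t) hXmeas Finset.univ
    simpa using this
  have hprod : ∏ i, mgf (X i) μ t ≤ Real.exp (p * t + t ^ 2 / 8) ^ N := by
    calc ∏ i, mgf (X i) μ t ≤ ∏ _i : Fin N, Real.exp (p * t + t ^ 2 / 8) :=
          Finset.prod_le_prod (fun i _ => mgf_nonneg) (fun i _ => hmgfle i)
      _ = Real.exp (p * t + t ^ 2 / 8) ^ N := by simp
  have hreal : (μ {ω | ↑N * p + ↑N * β ≤ ∑ i, X i ω}).toReal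
      ≤ Real.exp (-2 * ↑N * β ^ 2) := by
    have hset : {ω | ↑N * p + ↑N * β ≤ ∑ i, X i ω}
        = {ω | ↑N * p + ↑N * β ≤ (∑ i, X i) ω} := by
      ext ω; simp [Finset.sum_apply]
    rw [hset]
    refine hcher.trans ?_
    rw [hmgfsum]
    calc Real.exp (-t * (↑N * p + ↑N * β)) * ∏ i, mgf (X i) μ t
        ≤ Real.exp (-t * (↑N * p + ↑N * β)) * Real.exp (p * t + t ^ 2 / 8) ^ N := by
          exact mul_le_mul_of_nonneg_left hprod (Real.exp_pos _).le
      _ = Real.exp (-t * (↑N * p + ↑N * β) + ↑N * (p * t + t ^ 2 / 8)) := by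
          rw [← Real.exp_nat_mul, ← Real.exp_add]
      _ = Real.exp (-2 * ↑N * β ^ 2) := by
          congr 1
          rw [htdef]; ring
  calc μ {ω | ↑N * p + ↑N * β ≤ ∑ i, X i ω}
      = ENNReal.ofReal (μ {ω | ↑N * p + ↑N * β ≤ ∑ i, X i ω}).toReal := by
        rw [ENNReal.ofReal_toReal (measure_ne_top μ _)]
    _ ≤ ENNReal.ofReal (Real.exp (-2 * ↑N * β ^ 2)) := ENNReal.ofReal_le_ofReal hreal

set_option maxHeartbeats 1000000 in
theorem stmt_13 {Ω : Type*} [MeasurableSpace Ω] (μ : Measure Ω) [IsProbabilityMeasure μ]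
    (N : ℕ) (hN : 1 ≤ N) (ε α R : ℝ) (hε : 0 < ε) (hα : 0 < α) (hR : 0 < R)
    (f : ℝ → ℝ) (hf_meas : Measurable f) (hf_nonneg : 0 ≤ f)
    (C : ℝ) (hC : 0 < C) (hfC : ∀ x, f x ≤ C)
    (Y : Fin N → Ω → ℝ) (hmeas : ∀ i, Measurable (Y i))
    (hindep : iIndepFun Y μ)
    (hlaw : ∀ i, Measure.map (Y i) μ = volume.withDensity (fun y => ENNReal.ofReal (f y))) :
    μ {ω | C + α ≤ ⨆ x : Set.Icc (-R) R,
        (∑ i : Fin N, if |Y i ω - (x : ℝ)| ≤ ε then (1 : ℝ) else 0) / N / (2 * ε)}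
      ≤ ENNReal.ofReal ((2 * R * C / (ε * α) + 2) * Real.exp (-2 * N * (ε * α) ^ 2)) := by
  have hNpos : (0:ℝ) < N := by exact_mod_cast hN
  set δ : ℝ := ε * α / (2 * C) with hδdef
  have hδ : 0 < δ := by positivity
  set β : ℝ := ε * α with hβdef
  have hβ : 0 < β := by positivity
  set p' : ℝ := 2 * (ε + δ) * C with hp'def
  set c : ℤ → ℝ := fun k => 2 * k * δ with hcdef
  set m : ℤ := ⌊R / (2 * δ) + 1 / 2⌋ with hmdef
  have hm0 : 0 ≤ m := Int.le_floor.mpr (by push_cast; positivity)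
  set s : Finset ℤ := Finset.Icc (-m) m with hsdef
  set X : ℤ → Fin N → Ω → ℝ :=
    fun k i ω => if |Y i ω - c k| ≤ ε + δ then 1 else 0 with hXdef
  set A : ℤ → Set Ω := fun k => {ω | ↑N * p' + ↑N * β ≤ ∑ i, X k i ω} with hAdef
  -- grid facts
  have hgrid : ∀ x : ℝ, x ∈ Set.Icc (-R) R →
      ∃ k ∈ s, |x - c k| ≤ δ := by
    intro x hx
    obtain ⟨hx1, hx2⟩ := hx
    refine ⟨⌊x / (2 * δ) + 1 / 2⌋, ?_, ?_⟩
    · rw [hsdef, Finset.mem_Icc]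
      constructor
      · have h1 : R / (2 * δ) + 1 / 2 < (m : ℝ) + 1 := Int.lt_floor_add_one _
        have h2 : x / (2 * δ) + 1 / 2 - 1 < (⌊x / (2 * δ) + 1 / 2⌋ : ℝ) := by
          linarith [Int.lt_floor_add_one (x / (2 * δ) + 1 / 2)]
        have h3 : -R / (2 * δ) ≤ x / (2 * δ) := by gcongr
        have h4 : (-(m:ℝ) - 1) < (⌊x / (2 * δ) + 1 / 2⌋ : ℝ) := by
          have h5 : (m : ℝ) ≤ R / (2 * δ) + 1 / 2 := Int.floor_le _
          have h6 : -R / (2*δ) = -(R/(2*δ)) := by ring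
          linarith
        have h7 : (-m - 1 : ℤ) < ⌊x / (2 * δ) + 1 / 2⌋ := by exact_mod_cast h4
        omega
      · apply Int.floor_le_floor
        gcongr
    · have h2δ : (0:ℝ) < 2 * δ := by positivity
      have e1 : x / (2 * δ) * (2 * δ) = x := div_mul_cancel₀ x (ne_of_gt h2δ)
      have hfl : (⌊x / (2 * δ) + 1 / 2⌋ : ℝ) ≤ x / (2 * δ) + 1 / 2 := Int.floor_le _
      have hfl2 : x / (2 * δ) + 1 / 2 < (⌊x / (2 * δ) + 1 / 2⌋ : ℝ) + 1 :=
        Int.lt_floor_add_one _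
      rw [abs_le]
      constructor
      · simp only [hcdef]
        nlinarith [mul_le_mul_of_nonneg_right hfl h2δ.le]
      · simp only [hcdef]
        nlinarith [mul_le_mul_of_nonneg_right hfl2.le h2δ.le]
  -- event inclusion
  have hsub : {ω | C + α ≤ ⨆ x : Set.Icc (-R) R,
      (∑ i : Fin N, if |Y i ω - (x : ℝ)| ≤ ε then (1 : ℝ) else 0) / N / (2 * ε)}
      ⊆ ⋃ k ∈ s, A k := by
    intro ω hω
    simp only [Set.mem_setOf_eq] at hω
    have hne : s.Nonempty := ⟨0, by rw [hsdef, Finset.mem_Icc]; omega⟩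
    set T : ℤ → ℝ := fun k => ∑ i, X k i ω with hTdef
    set M : ℝ := s.sup' hne T with hMdef
    haveI : Nonempty ↥(Set.Icc (-R) R) := ⟨⟨0, by constructor <;> linarith⟩⟩
    have hkey : (⨆ x : Set.Icc (-R) R,
        (∑ i : Fin N, if |Y i ω - (x : ℝ)| ≤ ε then (1 : ℝ) else 0) / N / (2 * ε))
        ≤ M / N / (2 * ε) := by
      apply ciSup_le
      intro x
      obtain ⟨k, hks, hkx⟩ := hgrid (x : ℝ) x.2
      have hcount : (∑ i : Fin N, if |Y i ω - (x : ℝ)| ≤ ε then (1 : ℝ) else 0) ≤ T k := by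
        apply Finset.sum_le_sum
        intro i _
        simp only [hXdef]
        split_ifs with h1 h2
        · exact le_refl _
        · exfalso; apply h2
          calc |Y i ω - c k| = |(Y i ω - (x:ℝ)) + ((x:ℝ) - c k)| := by ring_nf
            _ ≤ |Y i ω - (x:ℝ)| + |(x:ℝ) - c k| := abs_add_le _ _
            _ ≤ ε + δ := add_le_add h1 hkx
        · norm_num
        · exact le_refl _
      have hTM : T k ≤ M := Finset.le_sup' T hks
      have hfin : (∑ i : Fin N, if |Y i ω - (x : ℝ)| ≤ ε then (1 : ℝ) else 0) ≤ M :=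
        le_trans hcount hTM
      gcongr
    have hCαM : C + α ≤ M / N / (2 * ε) := le_trans hω hkey
    obtain ⟨k0, hk0s, hk0⟩ := Finset.exists_mem_eq_sup' hne T
    have hMle : (C + α) * (↑N * (2 * ε)) ≤ M := by
      rw [div_div] at hCαM
      exact (le_div_iff₀ (by positivity)).mp hCαM
    have hthresh : ↑N * p' + ↑N * β = (C + α) * (↑N * (2 * ε)) := by
      rw [hp'def, hδdef, hβdef]
      field_simp
      ring
    refine Set.mem_biUnion hk0s ?_
    simp only [hAdef, Set.mem_setOf_eq]
    rw [hthresh]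
    calc (C + α) * (↑N * (2 * ε)) ≤ M := hMle
      _ = T k0 := hk0
      _ = ∑ i, X k0 i ω := rfl
  -- per-center Chernoff bound
  have hA : ∀ k, μ (A k) ≤ ENNReal.ofReal (Real.exp (-2 * ↑N * β ^ 2)) := by
    intro k
    have hφmeas : Measurable (fun y : ℝ => if |y - c k| ≤ ε + δ then (1:ℝ) else 0) := by
      apply Measurable.ite _ measurable_const measurable_const
      exact measurableSet_le ((measurable_id.sub_const _).abs) measurable_const
    have hXmeas : ∀ i, Measurable (X k i) := fun i => hφmeas.comp (hmeas i)
    have hXindep : iIndepFun (X k) μ :=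
      hindep.comp (fun _ y => if |y - c k| ≤ ε + δ then (1:ℝ) else 0) (fun _ => hφmeas)
    have hX01 : ∀ i ω, X k i ω = 0 ∨ X k i ω = 1 := by
      intro i ω; simp only [hXdef]; split_ifs <;> simp
    have hp : ∀ i, μ[X k i] ≤ p' := by
      intro i
      have hXind : X k i = Set.indicator
          (Y i ⁻¹' Set.Icc (c k - (ε + δ)) (c k + (ε + δ))) (fun _ => (1:ℝ)) := by
        funext ω
        by_cases h : |Y i ω - c k| ≤ ε + δ
        · have hmem : Y i ω ∈ Set.Icc (c k - (ε + δ)) (c k + (ε + δ)) := by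
            rw [abs_le] at h
            exact ⟨by linarith [h.1, h.2], by linarith [h.1, h.2]⟩
          simp [hXdef, h, Set.indicator_of_mem, hmem]
        · have hmem : Y i ω ∉ Set.Icc (c k - (ε + δ)) (c k + (ε + δ)) := by
            intro hm
            obtain ⟨ha, hb⟩ := hm
            exact h (abs_le.mpr ⟨by linarith, by linarith⟩)
          simp [hXdef, h, Set.indicator_of_notMem, hmem]
      have hmeasS : MeasurableSet (Y i ⁻¹' Set.Icc (c k - (ε + δ)) (c k + (ε + δ))) :=
        (hmeas i) measurableSet_Icc
      rw [hXind, integral_indicator_const _ hmeasS]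
      simp only [smul_eq_mul, mul_one]
      have hμpre : μ (Y i ⁻¹' Set.Icc (c k - (ε + δ)) (c k + (ε + δ)))
          ≤ ENNReal.ofReal p' := by
        rw [← Measure.map_apply (hmeas i) measurableSet_Icc, hlaw i,
          withDensity_apply _ measurableSet_Icc]
        calc ∫⁻ y in Set.Icc (c k - (ε + δ)) (c k + (ε + δ)), ENNReal.ofReal (f y)
            ≤ ∫⁻ _y in Set.Icc (c k - (ε + δ)) (c k + (ε + δ)), ENNReal.ofReal C :=
              lintegral_mono (fun y => ENNReal.ofReal_le_ofReal (hfC y))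
          _ = ENNReal.ofReal C * volume (Set.Icc (c k - (ε + δ)) (c k + (ε + δ))) := by
              rw [setLIntegral_const]
          _ = ENNReal.ofReal C * ENNReal.ofReal (2 * (ε + δ)) := by
              rw [Real.volume_Icc]; congr 1; ring
          _ = ENNReal.ofReal p' := by
              rw [← ENNReal.ofReal_mul hC.le]; congr 1; rw [hp'def]; ring
      exact ENNReal.toReal_le_of_le_ofReal (by rw [hp'def]; positivity) hμpre
    exact chernoff_sum_indicator μ N (X k) hXmeas hXindep hX01 p' β hβ hp
  -- cardinality bound
  have hcard : (s.card : ℝ) ≤ 2 * R * C / (ε * α) + 2 := by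
    have h1 : s.card = (2 * m + 1).toNat := by
      rw [hsdef, Int.card_Icc]
      congr 1; omega
    have h2 : (s.card : ℝ) = 2 * (m : ℝ) + 1 := by
      rw [h1]
      have : ((2 * m + 1).toNat : ℤ) = 2 * m + 1 := Int.toNat_of_nonneg (by omega)
      exact_mod_cast congrArg (Int.cast : ℤ → ℝ) this
    have h3 : (m : ℝ) ≤ R / (2 * δ) + 1 / 2 := Int.floor_le _
    have h4 : R / δ = 2 * R * C / (ε * α) := by
      rw [hδdef, hβdef]; field_simp
    have h5 : R / (2 * δ) = (R / δ) / 2 := by ring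
    rw [h2]
    rw [h5, h4] at h3
    linarith
  -- conclusion
  calc μ {ω | C + α ≤ ⨆ x : Set.Icc (-R) R,
        (∑ i : Fin N, if |Y i ω - (x : ℝ)| ≤ ε then (1 : ℝ) else 0) / N / (2 * ε)}
      ≤ μ (⋃ k ∈ s, A k) := measure_mono hsub
    _ ≤ ∑ k ∈ s, μ (A k) := measure_biUnion_finset_le s A
    _ ≤ ∑ _k ∈ s, ENNReal.ofReal (Real.exp (-2 * ↑N * β ^ 2)) :=
        Finset.sum_le_sum (fun k _ => hA k)
    _ = s.card • ENNReal.ofReal (Real.exp (-2 * ↑N * β ^ 2)) := by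
        rw [Finset.sum_const]
    _ = ENNReal.ofReal (s.card : ℝ) * ENNReal.ofReal (Real.exp (-2 * ↑N * β ^ 2)) := by
        rw [nsmul_eq_mul, ← ENNReal.ofReal_natCast]
    _ = ENNReal.ofReal ((s.card : ℝ) * Real.exp (-2 * ↑N * β ^ 2)) := by
        rw [← ENNReal.ofReal_mul (by positivity)]
    _ ≤ ENNReal.ofReal ((2 * R * C / (ε * α) + 2) * Real.exp (-2 * N * (ε * α) ^ 2)) := by
        apply ENNReal.ofReal_le_ofReal
        rw [hβdef]
        exact mul_le_mul_of_nonneg_right hcard (Real.exp_pos _).le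
end

section
/- Let Y₁,…,Y_N be i.i.d. real random variables with common law ρ having bounded density and finite exponential moment M_λ(ρ) = ∫ e^{λ|y|} ρ(dy) < ∞ for some λ > 0. Let ρ^N = (1/N)∑δ_{Y_i} and ‖μ‖_{∞,ε} = sup_x μ([x-ε,x+ε])/(2ε). Then for all ε, α > 0: P( ‖ρ^N‖_{∞,ε} ≥ ‖ρ‖_∞ + α ) ≤ ( 4‖ρ‖_∞ N(εα)/λ + 2 + N M_λ(ρ) ) e^{-2N(εα)²}. -/
open MeasureTheory ProbabilityTheory Finset
open scoped ENNReal NNReal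


lemma bern_mgf_bound (p : ℝ) (hp0 : 0 ≤ p) (hp1 : p ≤ 1) (s : ℝ) (hs : 0 ≤ s) :
    1 + p * (Real.exp s - 1) ≤ Real.exp (s * p + s ^ 2 / 8) := by
  set d : ℝ → ℝ := fun x => 1 + p * (Real.exp x - 1) with hd
  have hdpos : ∀ x, 0 < d x := by
    intro x
    have := Real.exp_pos x
    have : 0 < (1 - p) + p * Real.exp x := by
      rcases eq_or_lt_of_le hp1 with h | h
      · subst h; simpa using Real.exp_pos x
      · nlinarith [Real.exp_pos x]
    simp only [hd]; nlinarith
  have hdd : ∀ x, HasDerivAt d (p * Real.exp x) x := by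
    intro x
    exact ((Real.hasDerivAt_exp x).sub_const 1).const_mul p |>.const_add 1
  -- F x = x*p + x^2/8 - log (d x), F' = H, H' ≥ 0 on Ici 0
  set F : ℝ → ℝ := fun x => x * p + x ^ 2 / 8 - Real.log (d x) with hF
  set H : ℝ → ℝ := fun x => p + x / 4 - p * Real.exp x / d x with hH
  have hdF : ∀ x, HasDerivAt F (H x) x := by
    intro x
    have h1 : HasDerivAt (fun x : ℝ => x * p + x ^ 2 / 8) (p + 2 * x / 8) x := by
      have := ((hasDerivAt_id x).mul_const p).add (((hasDerivAt_pow 2 x)).div_const 8)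
      exact this.congr_deriv (by norm_num)
    have h2 : HasDerivAt (fun x => Real.log (d x)) (p * Real.exp x / d x) x :=
      (hdd x).log (hdpos x).ne'
    have := h1.sub h2
    exact this.congr_deriv (by simp only [hH]; ring)
  have hdH : ∀ x, HasDerivAt H (1 / 4 - p * Real.exp x * (1 - p) / (d x) ^ 2) x := by
    intro x
    have h1 : HasDerivAt (fun x : ℝ => p + x / 4) (1 / 4) x := by
      simpa using ((hasDerivAt_id x).div_const 4).const_add p
    have h2 : HasDerivAt (fun x => p * Real.exp x / d x)
        ((p * Real.exp x * d x - p * Real.exp x * (p * Real.exp x)) / (d x) ^ 2) x :=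
      ((Real.hasDerivAt_exp x).const_mul p).div (hdd x) (hdpos x).ne'
    have := h1.sub h2
    have hdx := (hdpos x).ne'
    exact this.congr_deriv (by rw [show d x = 1 + p * (Real.exp x - 1) from rfl]; ring)
  have hH'nonneg : ∀ x, 0 ≤ 1 / 4 - p * Real.exp x * (1 - p) / (d x) ^ 2 := by
    intro x
    rw [sub_nonneg, div_le_iff₀ (pow_pos (hdpos x) 2)]
    have : (d x) ^ 2 - 4 * (p * Real.exp x * (1 - p)) = (1 - p - p * Real.exp x) ^ 2 := by
      simp only [hd]; ring
    nlinarith [sq_nonneg (1 - p - p * Real.exp x)]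
  have hHmono : MonotoneOn H (Set.Ici 0) := by
    apply monotoneOn_of_deriv_nonneg (convex_Ici 0)
      (fun x _ => (hdH x).continuousAt.continuousWithinAt)
    · intro x _; exact (hdH x).differentiableAt.differentiableWithinAt
    · intro x _; rw [(hdH x).deriv]; exact hH'nonneg x
  have hH0 : H 0 = 0 := by simp [hH, hd]
  have hHnonneg : ∀ x ∈ Set.Ici (0:ℝ), 0 ≤ H x := by
    intro x hx
    rw [← hH0]
    exact hHmono (by simp) hx hx
  have hFmono : MonotoneOn F (Set.Ici 0) := by
    apply monotoneOn_of_deriv_nonneg (convex_Ici 0)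
      (fun x _ => (hdF x).continuousAt.continuousWithinAt)
    · intro x _; exact (hdF x).differentiableAt.differentiableWithinAt
    · intro x hx; rw [(hdF x).deriv]
      exact hHnonneg x (interior_subset hx)
  have hF0 : F 0 = 0 := by simp [hF, hd]
  have hFs : 0 ≤ F s := by rw [← hF0]; exact hFmono (by simp) hs hs
  have : Real.log (d s) ≤ s * p + s ^ 2 / 8 := by
    simp only [hF] at hFs; linarith
  calc d s ≤ Real.exp (Real.log (d s)) := by rw [Real.exp_log (hdpos s)]
    _ ≤ _ := Real.exp_le_exp.mpr this

lemma chernoff_interval {Ω : Type*} [MeasurableSpace Ω] (μ : Measure Ω) [IsProbabilityMeasure μ]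
    (N : ℕ) (Y : Fin N → Ω → ℝ) (hmeas : ∀ i, Measurable (Y i))
    (hindep : iIndepFun Y μ)
    (a b : ℝ) (p : ℝ)
    (hp : ∀ i, ((μ (Y i ⁻¹' Set.Icc a b)).toReal) ≤ p)
    (t T : ℝ) (ht : 0 < t) (hT : N * p + N * t ≤ T) :
    μ {ω | T ≤ ∑ i, if Y i ω ∈ Set.Icc a b then (1:ℝ) else 0}
      ≤ ENNReal.ofReal (Real.exp (-2 * N * t ^ 2)) := by
  classical
  set g : ℝ → ℝ := fun y => if y ∈ Set.Icc a b then 1 else 0 with hg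
  have hgmeas : Measurable g :=
    Measurable.ite measurableSet_Icc measurable_const measurable_const
  have hXmeas : ∀ i, Measurable (g ∘ Y i) := fun i => hgmeas.comp (hmeas i)
  have hXindep : iIndepFun (fun i => g ∘ Y i) μ :=
    hindep.comp _ (fun _ => hgmeas)
  set s : ℝ := 4 * t with hs_def
  have hs : 0 ≤ s := by positivity
  have hg01 : ∀ y, 0 ≤ g y ∧ g y ≤ 1 := by
    intro y; simp only [hg]; split <;> norm_num
  set S : Ω → ℝ := fun ω => ∑ i : Fin N, g (Y i ω) with hS
  have hSfun : S = ∑ i : Fin N, g ∘ Y i := by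
    funext ω; simp [hS]
  have hSapp : ∀ ω, S ω = ∑ i : Fin N, g (Y i ω) := fun ω => rfl
  have hSmeas : Measurable S :=
    Finset.measurable_sum _ (fun i _ => hXmeas i)
  have hint : Integrable (fun ω => Real.exp (s * S ω)) μ := by
    refine Integrable.mono' (integrable_const (Real.exp (s * N)))
      ((hSmeas.const_mul s).exp.aestronglyMeasurable) (ae_of_all _ fun ω => ?_)
    rw [Real.norm_eq_abs, Real.abs_exp]
    apply Real.exp_le_exp.mpr
    have hSN : S ω ≤ N := by
      rw [hSapp]
      calc ∑ i : Fin N, g (Y i ω) ≤ ∑ _i : Fin N, (1:ℝ) :=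
            Finset.sum_le_sum (fun i _ => (hg01 _).2)
        _ = N := by simp
    exact mul_le_mul_of_nonneg_left hSN hs
  have hchern := measure_ge_le_exp_mul_mgf (μ := μ) (X := S) T hs hint
  -- compute mgf of each indicator
  have hmgf_single : ∀ i : Fin N, mgf (g ∘ Y i) μ s
      = 1 + (μ (Y i ⁻¹' Set.Icc a b)).toReal * (Real.exp s - 1) := by
    intro i
    have heq : (fun ω => Real.exp (s * (g ∘ Y i) ω))
        = fun ω => 1 + Set.indicator (Y i ⁻¹' Set.Icc a b) (fun _ => Real.exp s - 1) ω := by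
      funext ω
      by_cases h : Y i ω ∈ Set.Icc a b
      · rw [Set.indicator_of_mem (Set.mem_preimage.mpr h)]
        simp only [Function.comp_apply, hg, if_pos h, mul_one]
        ring
      · rw [Set.indicator_of_notMem (fun hc => h (Set.mem_preimage.mp hc))]
        simp only [Function.comp_apply, hg, if_neg h, mul_zero, Real.exp_zero]
        ring
    rw [mgf, heq]
    rw [integral_add (integrable_const 1)
      ((integrable_const (Real.exp s - 1)).indicator ((hmeas i) measurableSet_Icc))]
    rw [integral_indicator_const _ ((hmeas i) measurableSet_Icc)]
    simp [mul_comm, Measure.real]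
  have hp0 : ∀ i : Fin N, (0:ℝ) ≤ (μ (Y i ⁻¹' Set.Icc a b)).toReal :=
    fun i => ENNReal.toReal_nonneg
  have hp1 : ∀ i : Fin N, (μ (Y i ⁻¹' Set.Icc a b)).toReal ≤ 1 := by
    intro i
    have := measure_mono (μ := μ) (Set.subset_univ (Y i ⁻¹' Set.Icc a b))
    rw [measure_univ] at this
    simpa using ENNReal.toReal_mono (by simp) this
  have hmgf_le : ∀ i : Fin N, mgf (g ∘ Y i) μ s ≤ Real.exp (s * p + s ^ 2 / 8) := by
    intro i
    rw [hmgf_single i]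
    calc 1 + (μ (Y i ⁻¹' Set.Icc a b)).toReal * (Real.exp s - 1)
        ≤ Real.exp (s * (μ (Y i ⁻¹' Set.Icc a b)).toReal + s ^ 2 / 8) :=
          bern_mgf_bound _ (hp0 i) (hp1 i) s hs
      _ ≤ _ := by
          apply Real.exp_le_exp.mpr
          have := hp i
          nlinarith
  have hmgf_sum : mgf S μ s = ∏ i : Fin N, mgf (g ∘ Y i) μ s := by
    rw [hSfun]; exact hXindep.mgf_sum hXmeas Finset.univ
  have hmgf_bound : mgf S μ s ≤ Real.exp ((N : ℝ) * (s * p + s ^ 2 / 8)) := by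
    rw [hmgf_sum]
    calc ∏ i : Fin N, mgf (g ∘ Y i) μ s
        ≤ ∏ _i : Fin N, Real.exp (s * p + s ^ 2 / 8) :=
          Finset.prod_le_prod (fun i _ => mgf_nonneg) (fun i _ => hmgf_le i)
      _ = Real.exp ((N : ℝ) * (s * p + s ^ 2 / 8)) := by
          rw [Finset.prod_const, Finset.card_univ, Fintype.card_fin, ← Real.exp_nat_mul]
  have hset : {ω | T ≤ ∑ i, if Y i ω ∈ Set.Icc a b then (1:ℝ) else 0} = {ω | T ≤ S ω} := by
    ext ω; simp only [Set.mem_setOf_eq, hSapp, hg]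
  rw [hset]
  have hne : μ {ω | T ≤ S ω} ≠ ⊤ := measure_ne_top μ _
  rw [← ENNReal.ofReal_toReal hne]
  apply ENNReal.ofReal_le_ofReal
  calc (μ {ω | T ≤ S ω}).toReal ≤ Real.exp (-s * T) * mgf S μ s := hchern
    _ ≤ Real.exp (-s * T) * Real.exp ((N : ℝ) * (s * p + s ^ 2 / 8)) :=
        mul_le_mul_of_nonneg_left hmgf_bound (Real.exp_pos _).le
    _ = Real.exp (-s * T + (N : ℝ) * (s * p + s ^ 2 / 8)) := by rw [← Real.exp_add]
    _ ≤ Real.exp (-2 * N * t ^ 2) := by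
        apply Real.exp_le_exp.mpr
        have hN0 : (0:ℝ) ≤ (N:ℝ) := Nat.cast_nonneg N
        simp only [hs_def]
        nlinarith [mul_le_mul_of_nonneg_left hT (le_of_lt ht)]
  done

theorem stmt_14 {Ω : Type*} [MeasurableSpace Ω] (μ : Measure Ω) [IsProbabilityMeasure μ]
    (N : ℕ) (hN : 1 ≤ N) (ε α lam : ℝ) (hε : 0 < ε) (hα : 0 < α) (hlam : 0 < lam)
    (f : ℝ → ℝ) (hf_meas : Measurable f) (hf_nonneg : 0 ≤ f)
    (C : ℝ) (hC : 0 < C) (hfC : ∀ x, f x ≤ C)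
    (hint : Integrable (fun y => Real.exp (lam * |y|) * f y) volume)
    (Y : Fin N → Ω → ℝ) (hmeas : ∀ i, Measurable (Y i))
    (hindep : iIndepFun Y μ)
    (hlaw : ∀ i, Measure.map (Y i) μ = volume.withDensity (fun y => ENNReal.ofReal (f y))) :
    μ {ω | C + α ≤ ⨆ x : ℝ,
        (∑ i : Fin N, if |Y i ω - x| ≤ ε then (1 : ℝ) else 0) / N / (2 * ε)}
      ≤ ENNReal.ofReal
          ((4 * C * N * (ε * α) / lam + 2 + N * ∫ y : ℝ, Real.exp (lam * |y|) * f y)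
            * Real.exp (-2 * N * (ε * α) ^ 2)) := by
  classical
  set M : ℝ := ∫ y : ℝ, Real.exp (lam * |y|) * f y with hM
  have hM0 : 0 ≤ M := integral_nonneg (fun y => mul_nonneg (Real.exp_pos _).le (hf_nonneg y))
  set R : ℝ := 2 * N * (ε * α) ^ 2 / lam with hRdef
  have hN0 : (0:ℝ) < N := by exact_mod_cast hN
  have hR0 : 0 ≤ R := by positivity
  set δ : ℝ := ε * α / C with hδdef
  have hδ0 : 0 < δ := by positivity
  set K : ℕ := ⌊2 * R / δ⌋₊ with hKdef
  set T : ℝ := 2 * ε * (C + α) * N with hTdef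
  set A : Set Ω := ⋃ i : Fin N, {ω | R < |Y i ω|} with hAdef
  set B : ℕ → Set Ω := fun j => {ω | T ≤ ∑ i, if Y i ω ∈
      Set.Icc (-R + j * δ - ε) (-R + j * δ + ε + δ) then (1:ℝ) else 0} with hBdef
  -- STEP 1 : inclusion
  have hsubset : {ω | C + α ≤ ⨆ x : ℝ,
      (∑ i : Fin N, if |Y i ω - x| ≤ ε then (1 : ℝ) else 0) / N / (2 * ε)}
      ⊆ A ∪ ⋃ j ∈ Finset.range (K + 1), B j := by
    intro ω hω
    simp only [Set.mem_setOf_eq] at hω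
    by_cases hAmem : ω ∈ A
    · exact Or.inl hAmem
    right
    have hA' : ∀ i : Fin N, |Y i ω| ≤ R := by
      simp only [hAdef, Set.mem_iUnion, Set.mem_setOf_eq, not_exists, not_lt] at hAmem
      exact hAmem
    set gfun : ℝ → ℝ := fun x =>
      (∑ i : Fin N, if |Y i ω - x| ≤ ε then (1 : ℝ) else 0) / N / (2 * ε) with hgfun
    have hrange : (Set.range gfun).Finite := by
      have hsub : Set.range gfun ⊆ (fun k : ℕ => (k:ℝ) / N / (2*ε)) '' Set.Iic N := by
        rintro _ ⟨x, rfl⟩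
        refine ⟨(Finset.univ.filter fun i => |Y i ω - x| ≤ ε).card,
          Set.mem_Iic.mpr ((Finset.card_filter_le _ _).trans (by simp)), ?_⟩
        simp [hgfun, Finset.sum_boole]
      exact ((Set.finite_Iic N).image _).subset hsub
    have hmem : sSup (Set.range gfun) ∈ Set.range gfun :=
      (Set.range_nonempty gfun).csSup_mem hrange
    obtain ⟨x0, hx0⟩ := hmem
    have hx0ge : C + α ≤ gfun x0 := by
      rw [hx0, sSup_range]; exact hω
    have hcount : T ≤ ∑ i : Fin N, if |Y i ω - x0| ≤ ε then (1:ℝ) else 0 := by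
      have h1 : C + α ≤ (∑ i : Fin N, if |Y i ω - x0| ≤ ε then (1:ℝ) else 0) / (N * (2*ε)) := by
        rw [← div_div]; exact hx0ge
      have h2 := (le_div_iff₀ (by positivity)).mp h1
      rw [hTdef]; linarith
    set x1 : ℝ := max (-R) (min R x0) with hx1def
    have hx1low : -R ≤ x1 := le_max_left _ _
    have hx1high : x1 ≤ R := max_le (by linarith) (min_le_left _ _)
    have hclamp : ∀ i : Fin N, |Y i ω - x0| ≤ ε → |Y i ω - x1| ≤ ε := by
      intro i hi
      have hy := abs_le.mp (hA' i)
      have hi' := abs_le.mp hi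
      rw [abs_le]
      rcases le_total x0 (-R) with hc1 | hc1
      · have hx1 : x1 = -R := by
          rw [hx1def, min_eq_right (by linarith), max_eq_left (by linarith)]
        constructor <;> rw [hx1] <;> linarith
      · rcases le_total R x0 with hc2 | hc2
        · have hx1 : x1 = R := by
            rw [hx1def, min_eq_left hc2, max_eq_right (by linarith)]
          constructor <;> rw [hx1] <;> linarith
        · have hx1 : x1 = x0 := by
            rw [hx1def, min_eq_right hc2, max_eq_right (by linarith)]
          constructor <;> rw [hx1] <;> linarith
    set j : ℕ := ⌊(x1 + R) / δ⌋₊ with hjdef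
    have hjK : j ≤ K :=
      Nat.floor_le_floor ((div_le_div_iff_of_pos_right hδ0).mpr (by linarith))
    have hj1 : (j:ℝ) * δ ≤ x1 + R := by
      have h := Nat.floor_le (show (0:ℝ) ≤ (x1 + R) / δ by
        apply div_nonneg (by linarith) hδ0.le)
      calc (j:ℝ) * δ ≤ ((x1 + R) / δ) * δ := mul_le_mul_of_nonneg_right h hδ0.le
        _ = x1 + R := div_mul_cancel₀ _ hδ0.ne'
    have hj2 : x1 + R < ((j:ℝ) + 1) * δ := by
      have h := Nat.lt_floor_add_one ((x1 + R) / δ)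
      have := (div_lt_iff₀ hδ0).mp h
      exact_mod_cast this
    refine Set.mem_iUnion₂.mpr ⟨j, Finset.mem_range.mpr (Nat.lt_succ_of_le hjK), ?_⟩
    show ω ∈ B j
    simp only [hBdef, Set.mem_setOf_eq]
    refine hcount.trans (Finset.sum_le_sum fun i _ => ?_)
    by_cases hcase : |Y i ω - x0| ≤ ε
    · rw [if_pos hcase, if_pos ?_]
      have h1 := abs_le.mp (hclamp i hcase)
      constructor
      · linarith [h1.1]
      · linarith [h1.2]
    · rw [if_neg hcase]
      split <;> norm_num
  -- STEP 2 : Chernoff bound on each B j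
  have hBj : ∀ j : ℕ, μ (B j)
      ≤ ENNReal.ofReal (Real.exp (-2 * N * (ε * α) ^ 2)) := by
    intro j
    have hp : ∀ i : Fin N, (μ (Y i ⁻¹' Set.Icc (-R + j * δ - ε) (-R + j * δ + ε + δ))).toReal
        ≤ 2 * ε * C + ε * α := by
      intro i
      have hmap : μ (Y i ⁻¹' Set.Icc (-R + j * δ - ε) (-R + j * δ + ε + δ))
          = ∫⁻ y in Set.Icc (-R + j * δ - ε) (-R + j * δ + ε + δ), ENNReal.ofReal (f y) := by
        rw [← Measure.map_apply (hmeas i) measurableSet_Icc, hlaw i,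
          withDensity_apply _ measurableSet_Icc]
      rw [hmap]
      apply ENNReal.toReal_le_of_le_ofReal (by positivity)
      calc ∫⁻ y in Set.Icc (-R + j * δ - ε) (-R + j * δ + ε + δ), ENNReal.ofReal (f y)
          ≤ ∫⁻ _ in Set.Icc (-R + j * δ - ε) (-R + j * δ + ε + δ), ENNReal.ofReal C :=
            lintegral_mono fun y => ENNReal.ofReal_le_ofReal (hfC y)
        _ = ENNReal.ofReal C * volume (Set.Icc (-R + j * δ - ε) (-R + j * δ + ε + δ)) :=
            setLIntegral_const _ _
        _ = ENNReal.ofReal C * ENNReal.ofReal ((-R + j * δ + ε + δ) - (-R + j * δ - ε)) := by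
            rw [Real.volume_Icc]
        _ = ENNReal.ofReal (C * (2 * ε + δ)) := by
            rw [← ENNReal.ofReal_mul hC.le]; congr 1; ring
        _ = ENNReal.ofReal (2 * ε * C + ε * α) := by
            congr 1
            rw [hδdef]
            field_simp
            try ring
    have hres := chernoff_interval μ N Y hmeas hindep
      (-R + j * δ - ε) (-R + j * δ + ε + δ) (2 * ε * C + ε * α) hp
      (ε * α) T (by positivity) (le_of_eq (by rw [hTdef]; ring))
    exact hres
  -- STEP 3 : tail bound on A
  have hA : μ A ≤ ENNReal.ofReal (N * M * Real.exp (-(lam * R))) := by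
    have hone : ∀ i : Fin N, μ {ω | R < |Y i ω|}
        ≤ ENNReal.ofReal (M * Real.exp (-(lam * R))) := by
      intro i
      have hms : MeasurableSet {y : ℝ | R < |y|} :=
        measurableSet_lt measurable_const measurable_abs
      have hset : {ω | R < |Y i ω|} = Y i ⁻¹' {y : ℝ | R < |y|} := rfl
      rw [hset, ← Measure.map_apply (hmeas i) hms, hlaw i, withDensity_apply _ hms]
      calc ∫⁻ y in {y : ℝ | R < |y|}, ENNReal.ofReal (f y)
          ≤ ∫⁻ y in {y : ℝ | R < |y|},
              ENNReal.ofReal (Real.exp (-(lam * R)) * (Real.exp (lam * |y|) * f y)) := by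
            refine setLIntegral_mono' hms fun y hy => ENNReal.ofReal_le_ofReal ?_
            have h1 : (1:ℝ) ≤ Real.exp (-(lam * R)) * Real.exp (lam * |y|) := by
              rw [← Real.exp_add]
              apply Real.one_le_exp
              have : R ≤ |y| := le_of_lt hy
              nlinarith
            nlinarith [hf_nonneg y, mul_le_mul_of_nonneg_right h1 (hf_nonneg y)]
        _ ≤ ∫⁻ y, ENNReal.ofReal (Real.exp (-(lam * R)) * (Real.exp (lam * |y|) * f y)) :=
            setLIntegral_le_lintegral _ _
        _ = ENNReal.ofReal (Real.exp (-(lam * R)))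
              * ∫⁻ y, ENNReal.ofReal (Real.exp (lam * |y|) * f y) := by
            simp_rw [ENNReal.ofReal_mul (Real.exp_pos (-(lam * R))).le]
            rw [lintegral_const_mul' _ _ ENNReal.ofReal_ne_top]
        _ = ENNReal.ofReal (Real.exp (-(lam * R))) * ENNReal.ofReal M := by
            rw [← ofReal_integral_eq_lintegral_ofReal hint
              (ae_of_all _ fun y => mul_nonneg (Real.exp_pos _).le (hf_nonneg y))]
        _ = ENNReal.ofReal (M * Real.exp (-(lam * R))) := by
            rw [← ENNReal.ofReal_mul (Real.exp_pos _).le, mul_comm]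
    calc μ A ≤ ∑' i : Fin N, μ {ω | R < |Y i ω|} := measure_iUnion_le _
      _ = ∑ i : Fin N, μ {ω | R < |Y i ω|} := tsum_fintype _
      _ ≤ ∑ _i : Fin N, ENNReal.ofReal (M * Real.exp (-(lam * R))) :=
          Finset.sum_le_sum fun i _ => hone i
      _ = (N : ℝ≥0∞) * ENNReal.ofReal (M * Real.exp (-(lam * R))) := by
          rw [Finset.sum_const, Finset.card_univ, Fintype.card_fin, nsmul_eq_mul]
      _ = ENNReal.ofReal (N * M * Real.exp (-(lam * R))) := by
          rw [← ENNReal.ofReal_natCast N,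
            ← ENNReal.ofReal_mul (Nat.cast_nonneg N), mul_assoc]
  -- STEP 4 : combine
  have hKle : (K : ℝ) ≤ 2 * R / δ := Nat.floor_le (by positivity)
  have hlamR : lam * R = 2 * N * (ε * α) ^ 2 := by
    rw [hRdef]; field_simp
  have h2Rδ : 2 * R / δ = 4 * C * N * (ε * α) / lam := by
    rw [hRdef, hδdef]; field_simp; ring
  calc μ {ω | C + α ≤ ⨆ x : ℝ,
        (∑ i : Fin N, if |Y i ω - x| ≤ ε then (1 : ℝ) else 0) / N / (2 * ε)}
      ≤ μ (A ∪ ⋃ j ∈ Finset.range (K + 1), B j) := measure_mono hsubset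
    _ ≤ μ A + μ (⋃ j ∈ Finset.range (K + 1), B j) := measure_union_le _ _
    _ ≤ ENNReal.ofReal (N * M * Real.exp (-(lam * R)))
        + ∑ j ∈ Finset.range (K + 1), μ (B j) :=
        add_le_add hA (measure_biUnion_finset_le _ _)
    _ ≤ ENNReal.ofReal (N * M * Real.exp (-(lam * R)))
        + ((K : ℝ≥0∞) + 1) * ENNReal.ofReal (Real.exp (-2 * N * (ε * α) ^ 2)) := by
        refine add_le_add le_rfl ?_
        calc ∑ j ∈ Finset.range (K + 1), μ (B j)
            ≤ ∑ _j ∈ Finset.range (K + 1),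
                ENNReal.ofReal (Real.exp (-2 * N * (ε * α) ^ 2)) :=
              Finset.sum_le_sum fun j _ => hBj j
          _ = ((K : ℝ≥0∞) + 1) * ENNReal.ofReal (Real.exp (-2 * N * (ε * α) ^ 2)) := by
              rw [Finset.sum_const, Finset.card_range, nsmul_eq_mul]
              push_cast
              ring
    _ ≤ ENNReal.ofReal
          ((4 * C * N * (ε * α) / lam + 2 + N * M)
            * Real.exp (-2 * N * (ε * α) ^ 2)) := by
        have hcast : ((K : ℝ≥0∞) + 1) = ENNReal.ofReal ((K : ℝ) + 1) := by
          rw [ENNReal.ofReal_add (Nat.cast_nonneg K) zero_le_one]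
          simp
        rw [hcast, ← ENNReal.ofReal_mul (by positivity), ← ENNReal.ofReal_add
          (by positivity) (by positivity)]
        apply ENNReal.ofReal_le_ofReal
        have hexp : Real.exp (-(lam * R)) = Real.exp (-2 * N * (ε * α) ^ 2) := by
          rw [hlamR]; ring_nf
        rw [hexp]
        have hK1 : (K : ℝ) + 1 ≤ 4 * C * N * (ε * α) / lam + 1 := by
          rw [← h2Rδ]; linarith
        nlinarith [Real.exp_pos (-2 * N * (ε * α) ^ 2), hM0, hN0,
          mul_le_mul_of_nonneg_right hK1 (Real.exp_pos (-2 * N * (ε * α) ^ 2)).le]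
end
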